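/- arXiv:1903.07229 — 3 statements merged into one kernel-verified Lean document; each statement's English description precedes it below -/
import Mathlib

section
/- The number ε_n of skew-symmetric (n,n)-clans lying in the largest sect equals Σ C(n,β)·C(n−β,2α)·(2α)!/(2^α·α!), where the sum is over all nonnegative integers α, β with 2α + β ≤ n. -/
/-- A skew-symmetric `(n,n)`-clan, encoded (via the standard bijection with signed
involutions) as a pair `(σ, s)` where `σ` is an involution of the `2n` positions whose
2-cycles are the pairs of positions carrying matching natural numbers, and `s` records
the signs at the fixed points (`true` = `+`, `false` = `−`; `s` is normalized to `true`
on non-fixed points).  The conditions say: `σ` is an involution; `s` is normalized;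
there are equally many `+`'s and `−`'s among the sign symbols; and the clan equals its
reverse with all signs interchanged (`Fin.rev` is the reflection `i ↦ 2n+1−i`). -/
def IsSkewClan (n : ℕ) (σ : Equiv.Perm (Fin (2 * n))) (s : Fin (2 * n) → Bool) : Prop :=
  Function.Involutive σ ∧
  (∀ i, σ i ≠ i → s i = true) ∧
  (Finset.univ.filter (fun i => σ i = i ∧ s i = true)).card =
    (Finset.univ.filter (fun i => σ i = i ∧ s i = false)).card ∧
  (∀ i, σ (Fin.rev i) = Fin.rev (σ i)) ∧
  (∀ i, σ i = i → s (Fin.rev i) = !(s i))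

/-- `Z_n`, the number of skew-symmetric `(n,n)`-clans. -/
noncomputable def Znum (n : ℕ) : ℕ :=
  Nat.card {p : Equiv.Perm (Fin (2 * n)) × (Fin (2 * n) → Bool) // IsSkewClan n p.1 p.2}

/-- A skew-symmetric `(n,n)`-clan `(σ, s)` lies in the *largest sect* if every `−` sign
(`s i = false` at a fixed point) occupies a position in the first half, every `+` sign
occupies a position in the second half, and every pair of matching natural numbers has
one position in each half. -/
def IsLargestSectClan (n : ℕ) (σ : Equiv.Perm (Fin (2 * n))) (s : Fin (2 * n) → Bool) :
    Prop :=
  IsSkewClan n σ s ∧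
  (∀ i : Fin (2 * n), σ i = i → (s i = false ↔ i.val < n)) ∧
  (∀ i : Fin (2 * n), σ i ≠ i → (i.val < n ↔ ¬ (σ i).val < n))

/-- `ε_n`, the number of skew-symmetric `(n,n)`-clans in the largest sect. -/
noncomputable def epsnum (n : ℕ) : ℕ :=
  Nat.card {p : Equiv.Perm (Fin (2 * n)) × (Fin (2 * n) → Bool) //
    IsLargestSectClan n p.1 p.2}

/-- odd double factorial: ddf α = 1·3·5···(2α−1) -/
def ddf : ℕ → ℕ
  | 0 => 1
  | (a+1) => (2*a+1) * ddf a

lemma ddf_mul (a : ℕ) : Nat.factorial (2*a) = ddf a * (2^a * Nat.factorial a) := by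
  induction a with
  | zero => simp [ddf]
  | succ k ih =>
    have h2 : 2*(k+1) = (2*k+1)+1 := by ring
    rw [h2, Nat.factorial_succ, Nat.factorial_succ, ih, ddf]
    rw [pow_succ, Nat.factorial_succ]
    ring

/-- signed involutions on a type -/
def InvSet (α : Type*) : Type _ :=
  {q : (α → α) × (α → Bool) // Function.Involutive q.1 ∧ ∀ i, q.1 i ≠ i → q.2 i = true}

instance instFiniteInvSet (α : Type*) [Finite α] : Finite (InvSet α) := by
  unfold InvSet; exact Subtype.finite

/-- transport along an equiv -/
def InvSet.congr {α β : Type*} (e : α ≃ β) : InvSet α ≃ InvSet β where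
  toFun q := ⟨(e ∘ q.1.1 ∘ e.symm, q.1.2 ∘ e.symm), by
    constructor
    · intro x; simp [q.2.1 (e.symm x)]
    · intro x hx
      apply q.2.2
      intro h; apply hx; simp [h]⟩
  invFun q := ⟨(e.symm ∘ q.1.1 ∘ e, q.1.2 ∘ e), by
    constructor
    · intro x; simp [q.2.1 (e x)]
    · intro x hx
      apply q.2.2
      intro h; apply hx; simp [h]⟩
  left_inv q := by
    apply Subtype.ext
    apply Prod.ext <;> funext x <;> simp
  right_inv q := by
    apply Subtype.ext
    apply Prod.ext <;> funext x <;> simp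

noncomputable def T (n : ℕ) : ℕ := Nat.card (InvSet (Fin n))

lemma invset_card_congr {α β : Type*} (e : α ≃ β) : Nat.card (InvSet α) = Nat.card (InvSet β) :=
  Nat.card_congr (InvSet.congr e)

lemma T_zero : T 0 = 1 := by
  rw [T, Nat.card_eq_one_iff_unique]
  constructor
  · constructor
    intro a b
    apply Subtype.ext
    apply Prod.ext <;> funext x <;> exact x.elim0
  · exact ⟨⟨(id, fun _ => true), fun x => x.elim0, fun x => x.elim0⟩⟩

lemma T_one : T 1 = 2 := by
  have e : InvSet (Fin 1) ≃ Bool := {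
    toFun := fun q => q.1.2 0
    invFun := fun b => ⟨(id, fun _ => b), fun x => rfl, fun x h => absurd rfl h⟩
    left_inv := by
      intro q
      apply Subtype.ext
      apply Prod.ext
      · funext x; exact Subsingleton.elim _ _
      · funext x; have : x = 0 := Subsingleton.elim _ _; rw [this]
    right_inv := fun b => rfl }
  rw [T, Nat.card_congr e, Nat.card_eq_two_iff]
  exact ⟨true, false, by simp, by ext x; simp [Bool.eq_false_or_eq_true x]⟩

section Rec
variable {β : Type*} [DecidableEq β]

/-- extension map realizing the recurrence -/
def extMap : (Bool × InvSet β) ⊕ ((j : β) × InvSet {x : β // x ≠ j}) → InvSet (Option β)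
  | Sum.inl (b, ⟨(τ, g), hτ, hg⟩) =>
    ⟨(fun o => Option.map τ o, fun o => o.elim b g), by
      have hτ' : Function.Involutive τ := hτ
      have hg' : ∀ i, τ i ≠ i → g i = true := hg
      constructor
      · intro o
        cases o with
        | none => rfl
        | some a => simp [hτ' a]
      · intro o ho
        cases o with
        | none => simp at ho
        | some a =>
          simp only [Option.map_some, ne_eq, Option.some.injEq] at ho
          exact hg' a ho⟩
  | Sum.inr ⟨j, ⟨(τ, g), hτ, hg⟩⟩ =>
    ⟨(fun o => o.elim (some j) (fun a => if ha : a = j then none else some (τ ⟨a, ha⟩).1),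
      fun o => o.elim true (fun a => if ha : a = j then true else g ⟨a, ha⟩)), by
      have hτ' : Function.Involutive τ := hτ
      have hg' : ∀ i, τ i ≠ i → g i = true := hg
      constructor
      · intro o
        cases o with
        | none => simp
        | some a =>
          by_cases ha : a = j
          · subst ha; simp
          · simp only [Option.elim, dif_neg ha]
            have h2 : (τ ⟨a, ha⟩).1 ≠ j := (τ ⟨a, ha⟩).2
            simp only [Option.elim, dif_neg h2]
            congr 1
            have h3 : (⟨(τ ⟨a, ha⟩).1, h2⟩ : {x : β // x ≠ j}) = τ ⟨a, ha⟩ := rfl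
            rw [h3, hτ' ⟨a, ha⟩]
      · intro o ho
        cases o with
        | none => simp
        | some a =>
          by_cases ha : a = j
          · simp [ha]
          · simp only [Option.elim, dif_neg ha]
            apply hg'
            intro hc
            apply ho
            simp only [Option.elim, dif_neg ha, hc]⟩

lemma extMap_injective : Function.Injective (extMap (β := β)) := by
  rintro (⟨b1, ⟨⟨τ1, g1⟩, h1, h1'⟩⟩ | ⟨j1, ⟨⟨τ1, g1⟩, h1, h1'⟩⟩)
    (⟨b2, ⟨⟨τ2, g2⟩, h2, h2'⟩⟩ | ⟨j2, ⟨⟨τ2, g2⟩, h2, h2'⟩⟩) h <;>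
    have hf := congrArg (fun q : InvSet (Option β) => q.1.1) h <;>
    have hs := congrArg (fun q : InvSet (Option β) => q.1.2) h <;>
    simp only [extMap] at hf hs <;> clear h
  · have hb : b1 = b2 := congrFun hs none
    have hg : g1 = g2 := funext fun a => congrFun hs (some a)
    have ht : τ1 = τ2 := funext fun a => by
      have := congrFun hf (some a)
      simpa using this
    subst hb; subst hg; subst ht; rfl
  · have := congrFun hf none
    simp [Option.elim] at this
  · have := congrFun hf none
    simp [Option.elim] at this
  · have hj : j1 = j2 := by
      have := congrFun hf none
      simpa [Option.elim] using this
    subst hj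
    have ht : τ1 = τ2 := funext fun x => by
      obtain ⟨a, ha⟩ := x
      have := congrFun hf (some a)
      simp only [Option.elim, dif_neg ha, Option.some.injEq] at this
      exact Subtype.ext this
    have hg : g1 = g2 := funext fun x => by
      obtain ⟨a, ha⟩ := x
      have := congrFun hs (some a)
      simpa [Option.elim, dif_neg ha] using this
    subst ht; subst hg; rfl

lemma extMap_surjective : Function.Surjective (extMap (β := β)) := by
  rintro ⟨⟨σ, s⟩, hσ0, hs0⟩
  have hσ : Function.Involutive σ := hσ0
  have hs : ∀ i, σ i ≠ i → s i = true := hs0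
  rcases h : σ none with _ | j
  · -- σ none = none
    have hne : ∀ a, σ (some a) ≠ none := by
      intro a hc
      have h5 := hσ (some a)
      rw [hc, h] at h5
      exact Option.some_ne_none a h5.symm
    have hso : ∀ a, (σ (some a)).isSome := fun a => Option.isSome_iff_ne_none.2 (hne a)
    set τ : β → β := fun a => (σ (some a)).get (hso a) with hτdef
    have key : ∀ a, (some (τ a) : Option β) = σ (some a) := fun a => Option.some_get (hso a)
    have hinv : Function.Involutive τ := by
      intro a
      have h5 : (some (τ (τ a)) : Option β) = some a := by
        rw [key (τ a), key a, hσ]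
      exact Option.some_injective _ h5
    have hnorm : ∀ a, τ a ≠ a → s (some a) = true := by
      intro a ha
      apply hs
      intro hc
      apply ha
      apply Option.some_injective
      rw [key a, hc]
    refine ⟨Sum.inl (s none, ⟨(τ, fun a => s (some a)), hinv, hnorm⟩), ?_⟩
    apply Subtype.ext
    show (_, _) = (σ, s)
    rw [Prod.mk.injEq]
    constructor
    · funext o
      cases o with
      | none => simp [h]
      | some a => exact key a
    · funext o
      cases o with
      | none => rfl
      | some a => rfl
  · -- σ none = some j
    have h1 : σ (some j) = none := by
      have h5 := hσ none
      rw [h] at h5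
      exact h5
    have hne : ∀ a, a ≠ j → σ (some a) ≠ none := by
      intro a ha hc
      have h5 := hσ (some a)
      rw [hc, h] at h5
      exact ha (Option.some_injective _ h5).symm
    have hnej : ∀ a, a ≠ j → σ (some a) ≠ some j := by
      intro a ha hc
      have h5 := hσ (some a)
      rw [hc, h1] at h5
      exact Option.some_ne_none a h5.symm
    have hso : ∀ (a : β), a ≠ j → (σ (some a)).isSome := fun a ha =>
      Option.isSome_iff_ne_none.2 (hne a ha)
    set τ : {x : β // x ≠ j} → {x : β // x ≠ j} := fun x =>
      ⟨(σ (some x.1)).get (hso x.1 x.2), by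
        intro hc
        apply hnej x.1 x.2
        rw [← Option.some_get (hso x.1 x.2), hc]⟩ with hτdef
    have key : ∀ x : {x : β // x ≠ j}, (some (τ x).1 : Option β) = σ (some x.1) := fun x =>
      Option.some_get (hso x.1 x.2)
    have hinv : Function.Involutive τ := by
      intro x
      apply Subtype.ext
      apply Option.some_injective
      rw [key (τ x), key x, hσ]
    have hnorm : ∀ x : {x : β // x ≠ j}, τ x ≠ x → s (some x.1) = true := by
      intro x hx
      apply hs
      intro hc
      apply hx
      apply Subtype.ext
      apply Option.some_injective
      rw [key x, hc]
    refine ⟨Sum.inr ⟨j, ⟨(τ, fun x => s (some x.1)), hinv, hnorm⟩⟩, ?_⟩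
    apply Subtype.ext
    show (_, _) = (σ, s)
    rw [Prod.mk.injEq]
    constructor
    · funext o
      cases o with
      | none => exact h.symm
      | some a =>
        by_cases ha : a = j
        · subst ha
          simp only [Option.elim, dif_pos rfl]
          exact h1.symm
        · simp only [Option.elim, dif_neg ha]
          exact key ⟨a, ha⟩
    · funext o
      cases o with
      | none =>
        have h6 : s none = true := hs none (by rw [h]; simp)
        simp [Option.elim, h6]
      | some a =>
        by_cases ha : a = j
        · subst ha
          have h6 : s (some a) = true := hs (some a) (by rw [h1]; simp)
          simp [Option.elim, h6, dif_pos rfl]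
        · simp [Option.elim, dif_neg ha]

lemma card_option_rec :
    Nat.card (InvSet (Option β)) =
      Nat.card ((Bool × InvSet β) ⊕ ((j : β) × InvSet {x : β // x ≠ j})) :=
  (Nat.card_eq_of_bijective extMap ⟨extMap_injective, extMap_surjective⟩).symm

end Rec

lemma T_rec (m : ℕ) : T (m+2) = 2 * T (m+1) + (m+1) * T m := by
  have e1 : Fin (m+2) ≃ Option (Fin (m+1)) := finSuccEquiv (m+1)
  rw [T, invset_card_congr e1, card_option_rec, Nat.card_sum, Nat.card_prod]
  have hfib : ∀ j : Fin (m+1), Nat.card (InvSet {x : Fin (m+1) // x ≠ j}) = T m := by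
    intro j
    apply invset_card_congr
    apply Fintype.equivFinOfCardEq
    simp [Fintype.card_subtype_compl, Fintype.card_subtype_eq]
  have hsig : Nat.card ((j : Fin (m+1)) × InvSet {x : Fin (m+1) // x ≠ j}) = (m+1) * T m := by
    letI : ∀ j : Fin (m+1), Fintype (InvSet {x : Fin (m+1) // x ≠ j}) :=
      fun j => Fintype.ofFinite _
    rw [Nat.card_eq_fintype_card, Fintype.card_sigma]
    have : ∀ j : Fin (m+1), Fintype.card (InvSet {x : Fin (m+1) // x ≠ j}) = T m := by
      intro j
      rw [← Nat.card_eq_fintype_card, hfib j]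
    rw [Finset.sum_congr rfl (fun j _ => this j)]
    simp [mul_comm]
  rw [hsig]
  have : Nat.card Bool = 2 := by simp
  rw [this]
  rfl

def Aterm (n a : ℕ) : ℕ := Nat.choose n (2*a) * 2^(n-2*a) * ddf a

noncomputable def Iser (n : ℕ) : ℕ := ∑ a ∈ Finset.range (n+1), Aterm n a

lemma Iser_ext (n m : ℕ) (h : n+1 ≤ m) : Iser n = ∑ a ∈ Finset.range m, Aterm n a := by
  rw [Iser]
  apply Finset.sum_subset
  · intro x hx
    simp only [Finset.mem_range] at *
    omega
  · intro x _ hx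
    simp only [Finset.mem_range] at hx
    have : n < 2*x := by omega
    simp [Aterm, Nat.choose_eq_zero_of_lt this]

lemma Aterm_succ (m a : ℕ) :
    Aterm (m+2) (a+1) = 2 * Aterm (m+1) (a+1) + (m+1) * Aterm m a := by
  have hd : ddf (a+1) = (2*a+1) * ddf a := rfl
  have h1 : 2*(a+1) = 2*a+1+1 := by ring
  by_cases hc : 2*a+1 ≤ m
  · obtain ⟨k, hk⟩ : ∃ k, m - 2*a = k+1 := ⟨m - (2*a+1), by omega⟩
    have he3 : m+2-(2*(a+1)) = k+1 := by omega
    have he2 : m+1-(2*(a+1)) = k := by omega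
    have he1 : m-2*a = k+1 := hk
    rw [Aterm, Aterm, Aterm, he3, he2, he1, h1]
    rw [Nat.choose_succ_succ' (m+1) (2*a+1), hd]
    have hm' := (Nat.add_one_mul_choose_eq m (2*a)).symm
    have expand : (Nat.choose (m+1) (2*a+1) + Nat.choose (m+1) (2*a+1+1)) * 2^(k+1) *
        ((2*a+1) * ddf a) =
        Nat.choose (m+1) (2*a+1) * (2*a+1) * (2^(k+1) * ddf a) +
        2 * (Nat.choose (m+1) (2*a+1+1) * 2^k * ((2*a+1) * ddf a)) := by
      rw [pow_succ]; ring
    rw [expand, hm']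
    ring
  · by_cases hm2 : m = 2*a
    · subst hm2
      have z1 : Nat.choose (2*a+1) (2*(a+1)) = 0 := Nat.choose_eq_zero_of_lt (by omega)
      have e0 : 2*a+2-(2*(a+1)) = 0 := by omega
      have e0' : 2*a-2*a = 0 := by omega
      rw [Aterm, Aterm, Aterm, z1, e0, e0', hd]
      have : Nat.choose (2*a+2) (2*(a+1)) = 1 := by
        have : 2*(a+1) = 2*a+2 := by ring
        rw [this, Nat.choose_self]
      rw [this, Nat.choose_self]
      ring
    · have z1 : Nat.choose (m+2) (2*(a+1)) = 0 := Nat.choose_eq_zero_of_lt (by omega)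
      have z2 : Nat.choose (m+1) (2*(a+1)) = 0 := Nat.choose_eq_zero_of_lt (by omega)
      have z3 : Nat.choose m (2*a) = 0 := Nat.choose_eq_zero_of_lt (by omega)
      rw [Aterm, Aterm, Aterm, z1, z2, z3]
      ring

lemma Iser_rec (m : ℕ) : Iser (m+2) = 2 * Iser (m+1) + (m+1) * Iser m := by
  have h1 : Iser (m+2) = (∑ a ∈ Finset.range (m+2), Aterm (m+2) (a+1)) + Aterm (m+2) 0 :=
    Finset.sum_range_succ' _ _
  have h2 : Iser (m+1) = (∑ a ∈ Finset.range (m+2), Aterm (m+1) (a+1)) + Aterm (m+1) 0 := by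
    rw [Iser_ext (m+1) (m+3) (by omega)]
    exact Finset.sum_range_succ' _ _
  have h3 : Iser m = ∑ a ∈ Finset.range (m+2), Aterm m a := Iser_ext m (m+2) (by omega)
  have hsum : ∑ a ∈ Finset.range (m+2), Aterm (m+2) (a+1)
      = 2 * (∑ a ∈ Finset.range (m+2), Aterm (m+1) (a+1)) +
        (m+1) * (∑ a ∈ Finset.range (m+2), Aterm m a) := by
    rw [Finset.mul_sum, Finset.mul_sum, ← Finset.sum_add_distrib]
    exact Finset.sum_congr rfl fun a _ => Aterm_succ m a
  have hA2 : Aterm (m+2) 0 = 2^(m+2) := by simp [Aterm, ddf]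
  have hA1 : Aterm (m+1) 0 = 2^(m+1) := by simp [Aterm, ddf]
  rw [h1, h2, h3, hsum, hA1, hA2]
  ring

lemma T_eq_Iser (n : ℕ) : T n = Iser n := by
  induction n using Nat.strong_induction_on with
  | _ n ih =>
    match n with
    | 0 => rw [T_zero]; simp [Iser, Aterm, ddf]
    | 1 =>
      rw [T_one, Iser]
      rw [Finset.sum_range_succ, Finset.sum_range_one]
      have : Aterm 1 1 = 0 := by simp [Aterm, Nat.choose_eq_zero_of_lt (by omega : (1:ℕ) < 2)]
      simp [this, Aterm, ddf]
    | (m+2) =>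
      rw [T_rec, Iser_rec, ih m (by omega), ih (m+1) (by omega)]

lemma ddf_div (a : ℕ) : Nat.factorial (2*a) / (2^a * Nat.factorial a) = ddf a := by
  rw [ddf_mul]
  exact Nat.mul_div_cancel _ (by positivity)

lemma rhs_eq_Iser (n : ℕ) :
    ∑ p ∈ (Finset.range (n + 1) ×ˢ Finset.range (n + 1)).filter
        (fun p => 2 * p.1 + p.2 ≤ n),
      Nat.choose n p.2 * Nat.choose (n - p.2) (2 * p.1) *
        (Nat.factorial (2 * p.1) / (2 ^ p.1 * Nat.factorial p.1)) = Iser n := by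
  have step1 : ∀ p ∈ (Finset.range (n + 1) ×ˢ Finset.range (n + 1)).filter
      (fun p => 2 * p.1 + p.2 ≤ n),
      Nat.choose n p.2 * Nat.choose (n - p.2) (2 * p.1) *
        (Nat.factorial (2 * p.1) / (2 ^ p.1 * Nat.factorial p.1))
      = Nat.choose n (2 * p.1) * ddf p.1 * Nat.choose (n - 2 * p.1) p.2 := by
    rintro ⟨a, b⟩ hp
    simp only [Finset.mem_filter, Finset.mem_product, Finset.mem_range] at hp
    obtain ⟨⟨ha, hb⟩, hab⟩ := hp
    dsimp only at hab ⊢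
    rw [ddf_div]
    have key : Nat.choose n b * Nat.choose (n - b) (2*a) =
        Nat.choose n (2*a) * Nat.choose (n - 2*a) b := by
      have e1 := Nat.choose_mul (n := n) (show b ≤ 2*a+b by omega)
      have e2 := Nat.choose_mul (n := n) (show 2*a ≤ 2*a+b by omega)
      have e3 : Nat.choose (2*a+b) (2*a) = Nat.choose (2*a+b) b := Nat.choose_symm_add
      have e4 : 2*a+b-b = 2*a := by omega
      have e5 : 2*a+b-2*a = b := by omega
      rw [e4] at e1
      rw [e5] at e2
      rw [← e1, ← e3, e2]
    rw [key]
    ring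
  rw [Finset.sum_congr rfl step1]
  rw [Finset.sum_subset (Finset.filter_subset _ _)]
  · rw [Finset.sum_product]
    have inner : ∀ a ∈ Finset.range (n+1),
        ∑ b ∈ Finset.range (n+1), Nat.choose n (2*a) * ddf a * Nat.choose (n - 2*a) b
        = Nat.choose n (2*a) * ddf a * 2^(n - 2*a) := by
      intro a _
      rw [← Finset.mul_sum]
      congr 1
      rw [← Nat.sum_range_choose (n - 2*a)]
      symm
      apply Finset.sum_subset
      · intro x hx
        simp only [Finset.mem_range] at *
        omega
      · intro x _ hx
        simp only [Finset.mem_range] at hx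
        exact Nat.choose_eq_zero_of_lt (by omega)
    rw [Finset.sum_congr rfl inner, Iser]
    apply Finset.sum_congr rfl
    intro a _
    rw [Aterm]
    ring
  · rintro ⟨a, b⟩ hp hnp
    simp only [Finset.mem_filter, Finset.mem_product, Finset.mem_range] at hp hnp
    dsimp only
    by_cases h2 : 2*a ≤ n
    · have : n - 2*a < b := by omega
      rw [Nat.choose_eq_zero_of_lt this]
      ring
    · rw [Nat.choose_eq_zero_of_lt (show n < 2*a by omega)]
      ring

section PartA
variable {n : ℕ}

def emb (i : Fin n) : Fin (2*n) := ⟨i.val, by have := i.isLt; omega⟩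

lemma emb_val (i : Fin n) : (emb i).val = i.val := rfl

lemma rev_emb_val (i : Fin n) : (Fin.rev (emb i)).val = 2*n - 1 - i.val := by
  rw [Fin.val_rev, emb_val]
  have := i.isLt
  omega

lemma rev_emb_ge (i : Fin n) : ¬ (Fin.rev (emb i)).val < n := by
  rw [rev_emb_val]
  have := i.isLt
  omega

variable (τ : Fin n → Fin n) (g : Fin n → Bool)

def bigF (i : Fin n) : Fin (2*n) :=
  if τ i = i then (if g i then Fin.rev (emb i) else emb i) else Fin.rev (emb (τ i))

def ff (x : Fin (2*n)) : Fin (2*n) :=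
  if hx : x.val < n then bigF τ g ⟨x.val, hx⟩
  else Fin.rev (bigF τ g ⟨(Fin.rev x).val, by rw [Fin.val_rev]; have := x.isLt; omega⟩)

lemma ff_lt (x : Fin (2*n)) (hx : x.val < n) : ff τ g x = bigF τ g ⟨x.val, hx⟩ := by
  rw [ff, dif_pos hx]

lemma ff_emb (i : Fin n) : ff τ g (emb i) = bigF τ g i := by
  rw [ff_lt τ g (emb i) i.isLt]
  exact congrArg (bigF τ g) (Fin.ext rfl)

lemma ff_ge (x : Fin (2*n)) (hx : ¬ x.val < n) (i : Fin n) (hi : (Fin.rev x).val = i.val) :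
    ff τ g x = Fin.rev (bigF τ g i) := by
  rw [ff, dif_neg hx]
  congr 1
  apply congrArg
  exact Fin.ext hi

lemma ff_rev (x : Fin (2*n)) : ff τ g (Fin.rev x) = Fin.rev (ff τ g x) := by
  by_cases hx : x.val < n
  · have h1 : ¬ (Fin.rev x).val < n := by
      rw [Fin.val_rev]
      have := x.isLt
      omega
    rw [ff_ge τ g (Fin.rev x) h1 ⟨x.val, hx⟩ (by rw [Fin.rev_rev]), ff_lt τ g x hx]
  · have h1 : (Fin.rev x).val < n := by
      rw [Fin.val_rev]
      have := x.isLt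
      omega
    rw [ff_lt τ g (Fin.rev x) h1, ff_ge τ g x hx ⟨(Fin.rev x).val, h1⟩ rfl, Fin.rev_rev]

variable (hτ : Function.Involutive τ)
include hτ

lemma ff_bigF (i : Fin n) : ff τ g (bigF τ g i) = emb i := by
  by_cases h : τ i = i
  · by_cases hgi : g i
    · have e : bigF τ g i = Fin.rev (emb i) := by rw [bigF, if_pos h, if_pos hgi]
      rw [e, ff_rev, ff_emb, e, Fin.rev_rev]
    · have e : bigF τ g i = emb i := by rw [bigF, if_pos h, if_neg hgi]
      rw [e, ff_emb, e]
  · have e : bigF τ g i = Fin.rev (emb (τ i)) := by rw [bigF, if_neg h]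
    rw [e, ff_rev, ff_emb, bigF,
      if_neg (show τ (τ i) ≠ τ i by rw [hτ i]; exact fun hc => h hc.symm), hτ i, Fin.rev_rev]

lemma ff_invol : Function.Involutive (ff τ g) := by
  intro x
  by_cases hx : x.val < n
  · rw [ff_lt τ g x hx, ff_bigF τ g hτ]
    exact Fin.ext rfl
  · have h1 : (Fin.rev x).val < n := by
      rw [Fin.val_rev]
      have := x.isLt
      omega
    rw [ff_ge τ g x hx ⟨(Fin.rev x).val, h1⟩ rfl, ff_rev, ff_bigF τ g hτ]
    have : emb (⟨(Fin.rev x).val, h1⟩ : Fin n) = Fin.rev x := Fin.ext rfl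
    rw [this, Fin.rev_rev]

omit hτ

lemma bigF_fix_iff (i : Fin n) : bigF τ g i = emb i ↔ (τ i = i ∧ g i = false) := by
  rw [bigF]
  split_ifs with h hgi
  · simp only [h, hgi, true_and]
    constructor
    · intro hc
      exfalso
      have := congrArg Fin.val hc
      rw [rev_emb_val, emb_val] at this
      have := i.isLt
      omega
    · intro hc; simp at hc
  · simp [h, hgi]
  · simp only [h, false_and, iff_false]
    intro hc
    have := congrArg Fin.val hc
    rw [rev_emb_val, emb_val] at this
    have h1 := i.isLt
    have h2 := (τ i).isLt
    omega

lemma bigF_ge (i : Fin n) (hne : ¬ (τ i = i ∧ g i = false)) : ¬ (bigF τ g i).val < n := by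
  rw [bigF]
  split_ifs with h hgi
  · exact rev_emb_ge i
  · exact absurd ⟨h, by simp [hgi]⟩ hne
  · exact rev_emb_ge (τ i)

end PartA

section PartA2
variable {n : ℕ}

lemma ff_cross (τ : Fin n → Fin n) (g : Fin n → Bool) :
    ∀ x : Fin (2*n), ff τ g x ≠ x → (x.val < n ↔ ¬ (ff τ g x).val < n) := by
  intro x hne
  by_cases hx : x.val < n
  · set i : Fin n := ⟨x.val, hx⟩ with hi
    have hex : emb i = x := Fin.ext rfl
    have hfx : ff τ g x = bigF τ g i := ff_lt τ g x hx
    have h1 : ¬ (τ i = i ∧ g i = false) := by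
      intro hc
      apply hne
      rw [hfx, (bigF_fix_iff τ g i).mpr hc, hex]
    simp only [hx, true_iff, hfx]
    exact bigF_ge τ g i h1
  · have hz : (Fin.rev x).val < n := by
      rw [Fin.val_rev]
      have := x.isLt
      omega
    set i : Fin n := ⟨(Fin.rev x).val, hz⟩ with hi
    have hfx : ff τ g x = Fin.rev (bigF τ g i) := ff_ge τ g x hx i rfl
    have h1 : ¬ (τ i = i ∧ g i = false) := by
      intro hc
      apply hne
      rw [hfx, (bigF_fix_iff τ g i).mpr hc]
      have : emb i = Fin.rev x := Fin.ext rfl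
      rw [this, Fin.rev_rev]
    have h2 := bigF_ge τ g i h1
    simp only [hx, false_iff, not_not, hfx]
    rw [Fin.val_rev]
    have := (bigF τ g i).isLt
    have hn : 0 < n := by omega
    omega

lemma clanMem (τ : Fin n → Fin n) (g : Fin n → Bool) (hτ : Function.Involutive τ)
    (hg : ∀ i, τ i ≠ i → g i = true) :
    IsLargestSectClan n (Function.Involutive.toPerm (ff τ g) (ff_invol τ g hτ))
      (fun x => if ff τ g x = x ∧ x.val < n then false else true) := by
  set σp := Function.Involutive.toPerm (ff τ g) (ff_invol τ g hτ) with hσp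
  have hσx : ∀ x, σp x = ff τ g x := fun x => rfl
  set s : Fin (2*n) → Bool := fun x => if ff τ g x = x ∧ x.val < n then false else true with hs
  have hrevval : ∀ x : Fin (2*n), (Fin.rev x).val = 2*n - 1 - x.val := by
    intro x
    rw [Fin.val_rev]
    have := x.isLt
    omega
  refine ⟨⟨ff_invol τ g hτ, ?_, ?_, ?_, ?_⟩, ?_, ?_⟩
  · -- normalization
    intro x hx
    rw [hs]
    simp only [ite_eq_right_iff]
    rintro ⟨h1, _⟩
    exact absurd h1 hx
  · -- card condition
    apply Finset.card_bij' (fun x _ => Fin.rev x) (fun x _ => Fin.rev x)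
    · intro x hx
      simp only [Finset.mem_filter, Finset.mem_univ, true_and, hσx, hs] at hx ⊢
      obtain ⟨h1, h2⟩ := hx
      have hxn : ¬ x.val < n := by
        intro hc
        rw [if_pos ⟨h1, hc⟩] at h2
        exact Bool.false_ne_true h2
      refine ⟨by rw [ff_rev, h1], ?_⟩
      rw [if_pos]
      refine ⟨by rw [ff_rev, h1], ?_⟩
      rw [hrevval]
      have := x.isLt
      have hn : 0 < n := by omega
      omega
    · intro x hx
      simp only [Finset.mem_filter, Finset.mem_univ, true_and, hσx, hs] at hx ⊢
      obtain ⟨h1, h2⟩ := hx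
      have hxn : x.val < n := by
        by_contra hc
        rw [if_neg (fun hand => hc hand.2)] at h2
        exact Bool.false_ne_true h2.symm
      refine ⟨by rw [ff_rev, h1], ?_⟩
      rw [if_neg]
      rintro ⟨-, hc⟩
      rw [hrevval] at hc
      have := x.isLt
      omega
    · intro x _; exact Fin.rev_rev x
    · intro x _; exact Fin.rev_rev x
  · -- equivariance
    intro x
    exact ff_rev τ g x
  · -- sign flip at fixed points
    intro x hx
    rw [hσx] at hx
    by_cases hxn : x.val < n
    · have e1 : s x = false := by
        show (if ff τ g x = x ∧ x.val < n then false else true) = false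
        rw [if_pos ⟨hx, hxn⟩]
      have e2 : s (Fin.rev x) = true := by
        show (if ff τ g (Fin.rev x) = Fin.rev x ∧ (Fin.rev x).val < n then false else true) = true
        rw [if_neg]
        rintro ⟨-, hc⟩
        rw [hrevval] at hc
        have := x.isLt
        omega
      rw [e1, e2]; rfl
    · have e1 : s x = true := by
        show (if ff τ g x = x ∧ x.val < n then false else true) = true
        rw [if_neg (fun hand => hxn hand.2)]
      have e2 : s (Fin.rev x) = false := by
        show (if ff τ g (Fin.rev x) = Fin.rev x ∧ (Fin.rev x).val < n then false else true) = false
        rw [if_pos]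
        refine ⟨by rw [ff_rev, hx], ?_⟩
        rw [hrevval]
        have := x.isLt
        have hn : 0 < n := by omega
        omega
      rw [e1, e2]; rfl
  · -- sect condition
    intro x hx
    rw [hσx] at hx
    rw [hs]
    simp only
    by_cases hxn : x.val < n
    · rw [if_pos ⟨hx, hxn⟩]
      simp [hxn]
    · rw [if_neg (fun hand => hxn hand.2)]
      simp [hxn]
  · -- crossing
    intro x hx
    rw [hσx] at hx
    exact ff_cross τ g x hx

end PartA2

section PartA3
variable {n : ℕ}

def clanMap (q : InvSet (Fin n)) :
    {p : Equiv.Perm (Fin (2*n)) × (Fin (2*n) → Bool) // IsLargestSectClan n p.1 p.2} :=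
  ⟨(Function.Involutive.toPerm (ff q.1.1 q.1.2) (ff_invol q.1.1 q.1.2 q.2.1),
    fun x => if ff q.1.1 q.1.2 x = x ∧ x.val < n then false else true),
   clanMem q.1.1 q.1.2 q.2.1 q.2.2⟩

def readτ (σ : Equiv.Perm (Fin (2*n))) (i : Fin n) : Fin n :=
  if h : (σ (emb i)).val < n then i
  else ⟨2*n - 1 - (σ (emb i)).val, by have := (σ (emb i)).isLt; have := i.isLt; omega⟩

def readg (σ : Equiv.Perm (Fin (2*n))) (i : Fin n) : Bool :=
  if σ (emb i) = emb i then false else true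

lemma readτ_pos (σ : Equiv.Perm (Fin (2*n))) (i : Fin n) (h : (σ (emb i)).val < n) :
    readτ σ i = i := by
  rw [readτ, dif_pos h]

lemma readτ_neg (σ : Equiv.Perm (Fin (2*n))) (i : Fin n) (h : ¬ (σ (emb i)).val < n) :
    (readτ σ i).val = 2*n - 1 - (σ (emb i)).val := by
  rw [readτ, dif_neg h]

lemma read_clanMap (τ : Fin n → Fin n) (g : Fin n → Bool) (hτ : Function.Involutive τ)
    (hg : ∀ i, τ i ≠ i → g i = true) (i : Fin n) :
    readτ (Function.Involutive.toPerm (ff τ g) (ff_invol τ g hτ)) i = τ i ∧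
    readg (Function.Involutive.toPerm (ff τ g) (ff_invol τ g hτ)) i = g i := by
  set σp := Function.Involutive.toPerm (ff τ g) (ff_invol τ g hτ) with hσpdef
  have hb : σp (emb i) = bigF τ g i := ff_emb τ g i
  by_cases h : τ i = i
  · by_cases hgi : g i = false
    · have e : bigF τ g i = emb i := (bigF_fix_iff τ g i).mpr ⟨h, hgi⟩
      constructor
      · rw [readτ_pos σp i (by rw [hb, e]; exact i.isLt), h]
      · rw [readg, if_pos (by rw [hb, e]), hgi]
    · have hgt : g i = true := by
        cases hgb : g i
        · exact absurd hgb hgi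
        · rfl
      have e : bigF τ g i = Fin.rev (emb i) := by rw [bigF, if_pos h, hgt]; rfl
      have hv : ¬ (σp (emb i)).val < n := by rw [hb, e]; exact rev_emb_ge i
      constructor
      · apply Fin.ext
        rw [readτ_neg σp i hv, hb, e, rev_emb_val, h]
        have := i.isLt
        omega
      · rw [readg, if_neg, hgt]
        rw [hb, e]
        intro hc
        have h5 := congrArg Fin.val hc
        rw [rev_emb_val, emb_val] at h5
        have := i.isLt
        omega
  · have e : bigF τ g i = Fin.rev (emb (τ i)) := by rw [bigF, if_neg h]
    have hv : ¬ (σp (emb i)).val < n := by rw [hb, e]; exact rev_emb_ge (τ i)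
    constructor
    · apply Fin.ext
      rw [readτ_neg σp i hv, hb, e, rev_emb_val]
      have := (τ i).isLt
      omega
    · rw [readg, if_neg, (hg i h)]
      rw [hb, e]
      intro hc
      have h5 := congrArg Fin.val hc
      rw [rev_emb_val, emb_val] at h5
      have h6 := i.isLt
      have h7 := (τ i).isLt
      omega

lemma clanMap_injective : Function.Injective (clanMap (n := n)) := by
  rintro ⟨⟨τ1, g1⟩, hτ1, hg1⟩ ⟨⟨τ2, g2⟩, hτ2, hg2⟩ h
  have h1 : (clanMap ⟨(τ1, g1), hτ1, hg1⟩).1.1 = (clanMap ⟨(τ2, g2), hτ2, hg2⟩).1.1 := by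
    rw [h]
  unfold clanMap at h1
  dsimp only at h1
  have hτe : τ1 = τ2 := by
    funext i
    have e1 := (read_clanMap τ1 g1 hτ1 hg1 i).1
    have e2 := (read_clanMap τ2 g2 hτ2 hg2 i).1
    rw [← e1, ← e2, h1]
  have hge : g1 = g2 := by
    funext i
    have e1 := (read_clanMap τ1 g1 hτ1 hg1 i).2
    have e2 := (read_clanMap τ2 g2 hτ2 hg2 i).2
    rw [← e1, ← e2, h1]
  subst hτe
  subst hge
  rfl

lemma clanMap_surjective : Function.Surjective (clanMap (n := n)) := by
  rintro ⟨⟨σ, s⟩, H⟩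
  obtain ⟨⟨hinv0, hnorm0, hcard0, hrev0, hflip0⟩, hsect0, hcross0⟩ := H
  have hinv : Function.Involutive (⇑σ) := hinv0
  have hnorm : ∀ i, σ i ≠ i → s i = true := hnorm0
  have hrev : ∀ i, σ (Fin.rev i) = Fin.rev (σ i) := hrev0
  have hsect : ∀ i : Fin (2*n), σ i = i → (s i = false ↔ i.val < n) := hsect0
  have hcross : ∀ i : Fin (2*n), σ i ≠ i → (i.val < n ↔ ¬ (σ i).val < n) := hcross0
  set τ : Fin n → Fin n := readτ σ with hτdef
  set g : Fin n → Bool := readg σ with hgdef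
  have hF0 : ∀ i : Fin n, (σ (emb i)).val < n → σ (emb i) = emb i := by
    intro i hv
    by_contra hc
    exact absurd hv ((hcross (emb i) hc).mp i.isLt)
  have hkey : ∀ i : Fin n, σ (emb i) ≠ emb i → σ (emb i) = Fin.rev (emb (τ i)) := by
    intro i hne
    have hv : ¬ (σ (emb i)).val < n := fun hc => hne (hF0 i hc)
    apply Fin.ext
    rw [rev_emb_val, hτdef, readτ_neg σ i hv]
    have := (σ (emb i)).isLt
    have := i.isLt
    omega
  have hτfix : ∀ i : Fin n, σ (emb i) = emb i → τ i = i := by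
    intro i he
    rw [hτdef, readτ_pos σ i (by rw [he]; exact i.isLt)]
  have hτinv : Function.Involutive τ := by
    intro i
    by_cases he : σ (emb i) = emb i
    · rw [hτfix i he, hτfix i he]
    · have h1 := hkey i he
      have h2 : σ (emb (τ i)) = Fin.rev (emb i) := by
        have h3 := hrev (emb (τ i))
        rw [← h1, hinv (emb i)] at h3
        have h4 := congrArg Fin.rev h3
        rw [Fin.rev_rev] at h4
        exact h4.symm
      have hne2 : σ (emb (τ i)) ≠ emb (τ i) := by
        rw [h2]
        intro hc
        have h5 := congrArg Fin.val hc
        rw [rev_emb_val, emb_val] at h5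
        have := i.isLt
        have := (τ i).isLt
        omega
      have h3 := hkey (τ i) hne2
      have h5 : Fin.rev (emb (τ (τ i))) = Fin.rev (emb i) := by rw [← h3, h2]
      have h6 := congrArg Fin.val h5
      rw [rev_emb_val, rev_emb_val] at h6
      have := i.isLt
      have := (τ (τ i)).isLt
      exact Fin.ext (by omega)
  have hgnorm : ∀ i, τ i ≠ i → g i = true := by
    intro i hi
    rw [hgdef, readg, if_neg]
    intro hc
    exact hi (hτfix i hc)
  have hfirst : ∀ i : Fin n, ff τ g (emb i) = σ (emb i) := by
    intro i
    rw [ff_emb, bigF]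
    by_cases he : σ (emb i) = emb i
    · have ht := hτfix i he
      rw [if_pos ht]
      have hgf : g i = false := by rw [hgdef, readg, if_pos he]
      rw [hgf, if_neg Bool.false_ne_true]
      exact he.symm
    · have h1 := hkey i he
      by_cases ht : τ i = i
      · rw [if_pos ht]
        have hgt : g i = true := by rw [hgdef, readg, if_neg he]
        rw [hgt, if_pos rfl, h1, ht]
      · rw [if_neg ht]
        exact h1.symm
  have hffσ : ∀ x, ff τ g x = σ x := by
    intro x
    by_cases hx : x.val < n
    · have hex : emb (⟨x.val, hx⟩ : Fin n) = x := Fin.ext rfl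
      rw [← hex]
      exact hfirst ⟨x.val, hx⟩
    · have hz : (Fin.rev x).val < n := by
        rw [Fin.val_rev]
        have := x.isLt
        omega
      have hex : emb (⟨(Fin.rev x).val, hz⟩ : Fin n) = Fin.rev x := Fin.ext rfl
      calc ff τ g x = ff τ g (Fin.rev (Fin.rev x)) := by rw [Fin.rev_rev]
        _ = Fin.rev (ff τ g (Fin.rev x)) := ff_rev τ g (Fin.rev x)
        _ = Fin.rev (σ (Fin.rev x)) := by rw [← hex, hfirst]
        _ = σ (Fin.rev (Fin.rev x)) := (hrev (Fin.rev x)).symm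
        _ = σ x := by rw [Fin.rev_rev]
  refine ⟨⟨(τ, g), hτinv, hgnorm⟩, ?_⟩
  apply Subtype.ext
  show (_, _) = (σ, s)
  apply Prod.ext
  · apply Equiv.ext
    intro x
    exact hffσ x
  · funext x
    show (if ff τ g x = x ∧ x.val < n then false else true) = s x
    by_cases hfx : σ x = x
    · by_cases hx : x.val < n
      · rw [if_pos ⟨by rw [hffσ x]; exact hfx, hx⟩]
        exact ((hsect x hfx).mpr hx).symm
      · rw [if_neg (fun hand => hx hand.2)]
        have hne : s x ≠ false := fun hc => hx ((hsect x hfx).mp hc)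
        cases hsb : s x
        · exact absurd hsb hne
        · rfl
    · rw [if_neg (fun hand => hfx (by rw [← hffσ x]; exact hand.1))]
      exact (hnorm x hfx).symm

end PartA3

lemma epsnum_eq_T (n : ℕ) : epsnum n = T n := by
  rw [epsnum, T]
  exact (Nat.card_eq_of_bijective clanMap ⟨clanMap_injective, clanMap_surjective⟩).symm


/-- `ε_n = Σ C(n,β)·C(n−β,2α)·(2α)!/(2^α·α!)`, the sum running over all
nonnegative integers `α, β` with `2α + β ≤ n` (the division is exact). -/
theorem stmt11 (n : ℕ) :
    epsnum n =
      ∑ p ∈ (Finset.range (n + 1) ×ˢ Finset.range (n + 1)).filter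
          (fun p => 2 * p.1 + p.2 ≤ n),
        Nat.choose n p.2 * Nat.choose (n - p.2) (2 * p.1) *
          (Nat.factorial (2 * p.1) / (2 ^ p.1 * Nat.factorial p.1)) := by
  rw [epsnum_eq_T, T_eq_Iser, rhs_eq_Iser]
end

section
/- The number P_n of partial involutions on n letters satisfies P_0 = 1, P_1 = 2, and the recurrence P_n = 2·P_{n−1} + (n−1)·P_{n−2} for all n ≥ 2. -/
instance optFinite {α : Type*} [Finite α] : Finite (Option α) :=
  Finite.of_equiv _ (Equiv.optionEquivSumPUnit.{0} α).symm

/-- symmetric partial function -/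
def PSym {α : Type*} (f : α → Option α) : Prop := ∀ i j, f i = some j → f j = some i

def PB (α : Type*) : Type _ := {f : α → Option α // PSym f}

def equivB {α β : Type*} (e : α ≃ β) : PB α ≃ PB β where
  toFun f := ⟨fun b => (f.1 (e.symm b)).map e, by
    intro i j h
    rw [Option.map_eq_some_iff] at h
    obtain ⟨a, ha, rfl⟩ := h
    have := f.2 _ _ ha
    simp [this]⟩
  invFun g := ⟨fun a => (g.1 (e a)).map e.symm, by
    intro i j h
    rw [Option.map_eq_some_iff] at h
    obtain ⟨a, ha, rfl⟩ := h
    have := g.2 _ _ ha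
    simp [this]⟩
  left_inv f := by
    apply Subtype.ext; funext a
    simp [Option.map_map]
  right_inv g := by
    apply Subtype.ext; funext b
    simp [Option.map_map]

lemma card_congr_B {α β : Type*} (e : α ≃ β) : Nat.card (PB α) = Nat.card (PB β) :=
  Nat.card_congr (equivB e)

/-- extension with `none ↦ none` -/
def ext0 {α : Type*} (g : PB α) : PB (Option α) :=
  ⟨fun x => x.elim none (fun a => (g.1 a).map some), by
    rintro (_|a) (_|b) h
    · simp at h
    · simp at h
    · simp only [Option.elim, Option.map_eq_some_iff] at h
      obtain ⟨c, hc, h⟩ := h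
      exact absurd h (by simp)
    · simp only [Option.elim, Option.map_eq_some_iff] at h
      obtain ⟨c, hc, h⟩ := h
      obtain rfl : c = b := by simpa using h
      have := g.2 _ _ hc
      simp [this]⟩

/-- extension with `none ↦ some none` -/
def ext1 {α : Type*} (g : PB α) : PB (Option α) :=
  ⟨fun x => x.elim (some none) (fun a => (g.1 a).map some), by
    rintro (_|a) (_|b) h
    · simpa using h
    · simp at h
    · simp only [Option.elim, Option.map_eq_some_iff] at h
      obtain ⟨c, hc, h⟩ := h
      exact absurd h (by simp)
    · simp only [Option.elim, Option.map_eq_some_iff] at h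
      obtain ⟨c, hc, h⟩ := h
      obtain rfl : c = b := by simpa using h
      have := g.2 _ _ hc
      simp [this]⟩

/-- extension with `none ↦ some (some a₀)` -/
def ext2 {α : Type*} [DecidableEq α] (a₀ : α) (g : PB {x : α // x ≠ a₀}) : PB (Option α) :=
  ⟨fun x => x.elim (some (some a₀))
      (fun a => if h : a = a₀ then some none else (g.1 ⟨a, h⟩).map (fun b => some b.1)), by
    rintro (_|a) (_|b) h
    · simp at h
    · simp only [Option.elim, Option.some.injEq] at h
      subst h
      simp
    · -- f (some a) = some none → a = a₀, need f none = some (some a)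
      simp only [Option.elim] at h ⊢
      by_cases ha : a = a₀
      · subst ha; rfl
      · rw [dif_neg ha, Option.map_eq_some_iff] at h
        obtain ⟨c, hc, h⟩ := h
        exact absurd h (by simp)
    · simp only [Option.elim] at h ⊢
      by_cases ha : a = a₀
      · rw [dif_pos ha] at h; simp at h
      · rw [dif_neg ha, Option.map_eq_some_iff] at h
        obtain ⟨c, hc, h⟩ := h
        obtain rfl : c.1 = b := by simpa using h
        have := g.2 _ _ hc
        rw [dif_neg c.2, this]
        rfl⟩

lemma map_pmap_join {α : Type*} {a₀ : α} (o : Option (Option α)) (ho : o ≠ some none)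
    (H : ∀ b ∈ o.join, b ≠ a₀) :
    Option.map (fun b : {x : α // x ≠ a₀} => (some b.1 : Option α))
      (Option.pmap (fun b hb => (⟨b, hb⟩ : {x : α // x ≠ a₀})) o.join H) = o := by
  rcases o with _ | (_ | b)
  · rfl
  · exact absurd rfl ho
  · rfl

def Phi {α : Type*} [DecidableEq α] :
    (PB α ⊕ PB α ⊕ Σ a₀ : α, PB {x : α // x ≠ a₀}) → PB (Option α)
  | Sum.inl g => ext0 g
  | Sum.inr (Sum.inl g) => ext1 g
  | Sum.inr (Sum.inr ⟨a₀, g⟩) => ext2 a₀ g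

lemma phi_bij {α : Type*} [DecidableEq α] : Function.Bijective (Phi (α := α)) := by
  constructor
  · rintro (g|g|⟨a₀,g⟩) (g'|g'|⟨a₀',g'⟩) h <;>
      simp only [Phi] at h <;>
      have h0 := congrArg (fun f => f.1 none) h <;>
      simp only [ext0, ext1, ext2, Option.elim] at h0
    · -- both ext0
      have : g = g' := by
        apply Subtype.ext; funext a
        have ha := congrArg (fun f => f.1 (some a)) h
        simp only [ext0, Option.elim] at ha
        exact Option.map_injective (Option.some_injective α) ha
      rw [this]
    · exact absurd h0 (by simp)
    · exact absurd h0 (by simp)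
    · exact absurd h0 (by simp)
    · have : g = g' := by
        apply Subtype.ext; funext a
        have ha := congrArg (fun f => f.1 (some a)) h
        simp only [ext1, Option.elim] at ha
        exact Option.map_injective (Option.some_injective α) ha
      rw [this]
    · exact absurd h0 (by simp)
    · exact absurd h0 (by simp)
    · exact absurd h0 (by simp)
    · obtain rfl : a₀ = a₀' := by simpa using h0
      have : g = g' := by
        apply Subtype.ext; funext a
        have ha := congrArg (fun f => f.1 (some a.1)) h
        simp only [ext2, Option.elim, dif_neg a.2] at ha
        have hinj : Function.Injective (fun b : {x : α // x ≠ a₀} => (some b.1 : Option α)) := by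
          intro x y hxy
          exact Subtype.ext (by simpa using hxy)
        exact Option.map_injective hinj ha
      rw [this]
  · intro f
    rcases h0 : f.1 none with _ | (_ | a₀)
    · -- case f none = none : use ext0
      have hkey : ∀ a : α, f.1 (some a) ≠ some none := by
        intro a ha
        have := f.2 _ _ ha
        rw [h0] at this; simp at this
      refine ⟨Sum.inl ⟨fun a => (f.1 (some a)).join, ?_⟩, ?_⟩
      · intro i j h
        rw [Option.join_eq_some_iff] at h ⊢
        exact f.2 _ _ h
      · simp only [Phi]
        apply Subtype.ext; funext x
        cases x with
        | none => simpa [ext0] using h0.symm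
        | some a =>
          simp only [ext0, Option.elim]
          rcases ha : f.1 (some a) with _ | (_ | b)
          · simp
          · exact absurd ha (hkey a)
          · simp
    · -- case f none = some none : ext1
      have hkey : ∀ a : α, f.1 (some a) ≠ some none := by
        intro a ha
        have := f.2 _ _ ha
        rw [h0] at this; simp at this
      refine ⟨Sum.inr (Sum.inl ⟨fun a => (f.1 (some a)).join, ?_⟩), ?_⟩
      · intro i j h
        rw [Option.join_eq_some_iff] at h ⊢
        exact f.2 _ _ h
      · simp only [Phi]
        apply Subtype.ext; funext x
        cases x with
        | none => simpa [ext1] using h0.symm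
        | some a =>
          simp only [ext1, Option.elim]
          rcases ha : f.1 (some a) with _ | (_ | b)
          · simp
          · exact absurd ha (hkey a)
          · simp
    · -- case f none = some (some a₀) : ext2
      have ha₀ : f.1 (some a₀) = some none := f.2 _ _ h0
      have hkey : ∀ a : α, a ≠ a₀ → ∀ b ∈ (f.1 (some a)).join, b ≠ a₀ := by
        intro a ha b hb hba
        rw [Option.mem_def, Option.join_eq_some_iff] at hb
        subst hba
        have := f.2 _ _ hb
        rw [ha₀] at this
        simp at this
      have hkey2 : ∀ a : α, a ≠ a₀ → f.1 (some a) ≠ some none := by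
        intro a ha hcon
        have := f.2 _ _ hcon
        rw [h0] at this
        have h2 : a₀ = a := by simpa using this
        exact ha h2.symm
      refine ⟨Sum.inr (Sum.inr ⟨a₀, ⟨fun x =>
        Option.pmap (fun b hb => (⟨b, hb⟩ : {y : α // y ≠ a₀}))
          (f.1 (some x.1)).join (hkey x.1 x.2), ?_⟩⟩), ?_⟩
      · intro i j h
        rw [Option.pmap_eq_some_iff] at h ⊢
        obtain ⟨b, hb, hjoin, rfl⟩ := h
        rw [Option.join_eq_some_iff] at hjoin
        have hsy := f.2 _ _ hjoin
        exact ⟨i.1, i.2, by rw [Option.join_eq_some_iff]; exact hsy, Subtype.ext rfl⟩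
      · simp only [Phi]
        apply Subtype.ext; funext x
        cases x with
        | none => simpa [ext2] using h0.symm
        | some a =>
          simp only [ext2, Option.elim]
          by_cases ha : a = a₀
          · subst ha; rw [dif_pos rfl, ha₀]
          · rw [dif_neg ha]
            exact map_pmap_join _ (hkey2 a ha) _

instance (α : Type*) [Finite α] : Finite (PB α) :=
  Subtype.finite

lemma card_rec (n : ℕ) :
    Nat.card (PB (Fin (n+2))) =
      2 * Nat.card (PB (Fin (n+1))) + (n+1) * Nat.card (PB (Fin n)) := by
  rw [card_congr_B (finSuccEquiv (n+1))]
  rw [← Nat.card_congr (Equiv.ofBijective _ (phi_bij (α := Fin (n+1))))]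
  have he : ∀ a₀ : Fin (n+1), PB {x : Fin (n+1) // x ≠ a₀} ≃ PB (Fin n) := fun a₀ =>
    equivB (Fintype.equivFinOfCardEq (by simp [Fintype.card_subtype_compl]))
  have hsig : Nat.card (Σ a₀ : Fin (n+1), PB {x : Fin (n+1) // x ≠ a₀})
      = (n+1) * Nat.card (PB (Fin n)) := by
    rw [Nat.card_congr ((Equiv.sigmaCongrRight he).trans (Equiv.sigmaEquivProd _ _)),
      Nat.card_prod, Nat.card_eq_fintype_card, Fintype.card_fin]
  rw [Nat.card_sum, Nat.card_sum, hsig]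
  ring


/-- A *partial involution* on `n` letters: a symmetric `n × n` partial permutation
matrix (entries in `{0,1}`, at most one nonzero entry in each row and each column),
viewed over `ℚ`. -/
def IsPartialInvolution (n : ℕ) (M : Matrix (Fin n) (Fin n) ℚ) : Prop :=
  (∀ i j, M i j = 0 ∨ M i j = 1) ∧
  (∀ i j j', M i j = 1 → M i j' = 1 → j = j') ∧
  (∀ i i' j, M i j = 1 → M i' j = 1 → i = i') ∧
  M.IsSymm

/-- `P_n`, the number of partial involutions on `n` letters. -/
noncomputable def Pnum (n : ℕ) : ℕ :=
  Nat.card {M : Matrix (Fin n) (Fin n) ℚ // IsPartialInvolution n M}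

def toMat {n : ℕ} (f : PB (Fin n)) : Matrix (Fin n) (Fin n) ℚ :=
  Matrix.of fun i j => if f.1 i = some j then 1 else 0

lemma toMat_eq_one_iff {n : ℕ} (f : PB (Fin n)) (i j : Fin n) :
    toMat f i j = 1 ↔ f.1 i = some j := by
  unfold toMat
  rw [Matrix.of_apply]
  split
  · simp_all
  · simp_all

lemma toMat_prop {n : ℕ} (f : PB (Fin n)) : IsPartialInvolution n (toMat f) := by
  refine ⟨fun i j => ?_, fun i j j' hj hj' => ?_, fun i i' j hi hi' => ?_, ?_⟩
  · unfold toMat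
    rw [Matrix.of_apply]
    split
    · right; rfl
    · left; rfl
  · rw [toMat_eq_one_iff] at hj hj'
    simpa [hj] using hj'
  · rw [toMat_eq_one_iff] at hi hi'
    have h1 := f.2 _ _ hi
    have h2 := f.2 _ _ hi'
    simpa [h1] using h2
  · apply Matrix.IsSymm.ext
    intro i j
    unfold toMat
    simp only [Matrix.of_apply]
    by_cases h : f.1 i = some j
    · rw [if_pos h, if_pos (f.2 _ _ h)]
    · rw [if_neg h, if_neg (fun hc => h (f.2 _ _ hc))]

lemma toMat_bijective (n : ℕ) :
    Function.Bijective (fun f : PB (Fin n) =>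
      (⟨toMat f, toMat_prop f⟩ : {M : Matrix (Fin n) (Fin n) ℚ // IsPartialInvolution n M})) := by
  constructor
  · intro f f' h
    have h' : toMat f = toMat f' := congrArg Subtype.val h
    apply Subtype.ext; funext i
    have key : ∀ j, f.1 i = some j ↔ f'.1 i = some j := by
      intro j
      rw [← toMat_eq_one_iff, ← toMat_eq_one_iff, h']
    rcases hfi : f.1 i with _ | j
    · rcases hfi' : f'.1 i with _ | j'
      · rfl
      · exact absurd hfi (by rw [(key j').mpr hfi']; simp)
    · exact ((key j).mp hfi).symm
  · rintro ⟨M, h01, hrow, hcol, hsymm⟩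
    have hMiff : ∀ i j, (if h : ∃ j', M i j' = 1 then some h.choose else none) = some j ↔
        M i j = 1 := by
      intro i j
      constructor
      · intro h
        split at h
        · next hex =>
          obtain rfl : hex.choose = j := by simpa using h
          exact hex.choose_spec
        · simp at h
      · intro h
        have hex : ∃ j', M i j' = 1 := ⟨j, h⟩
        rw [dif_pos hex]
        exact congrArg some (hrow i _ j hex.choose_spec h)
    refine ⟨⟨fun i => if h : ∃ j', M i j' = 1 then some h.choose else none, ?_⟩, ?_⟩
    · intro i j h
      rw [hMiff] at h ⊢
      rw [← hsymm.apply i j] at h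
      exact h
    · apply Subtype.ext
      ext i j
      show (if _ = some j then (1:ℚ) else 0) = M i j
      rcases h01 i j with h | h
      · rw [if_neg, h]
        intro hc
        rw [hMiff] at hc
        rw [hc] at h
        exact one_ne_zero h
      · rw [if_pos ((hMiff i j).mpr h), h]
  
lemma pnum_eq (n : ℕ) : Pnum n = Nat.card (PB (Fin n)) :=
  (Nat.card_congr (Equiv.ofBijective _ (toMat_bijective n))).symm

lemma psym_triv {n : ℕ} (hn : n ≤ 1) (f : Fin n → Option (Fin n)) : PSym f := by
  intro i j h
  interval_cases n
  · exact i.elim0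
  · obtain rfl : i = j := Subsingleton.elim i j
    exact h

lemma pb_card_le1 (n : ℕ) (hn : n ≤ 1) :
    Nat.card (PB (Fin n)) = Fintype.card (Fin n → Option (Fin n)) := by
  have e : PB (Fin n) ≃ (Fin n → Option (Fin n)) := Equiv.subtypeUnivEquiv (psym_triv hn)
  rw [Nat.card_congr e, Nat.card_eq_fintype_card]

lemma pnum_zero : Pnum 0 = 1 := by
  rw [pnum_eq, pb_card_le1 0 (by norm_num)]
  simp

lemma pnum_one : Pnum 1 = 2 := by
  rw [pnum_eq, pb_card_le1 1 (by norm_num)]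
  simp

/-- `P_0 = 1`, `P_1 = 2`, and `P_n = 2·P_{n−1} + (n−1)·P_{n−2}` for `n ≥ 2`. -/
theorem stmt12 :
    Pnum 0 = 1 ∧ Pnum 1 = 2 ∧
    ∀ n : ℕ, 2 ≤ n → Pnum n = 2 * Pnum (n - 1) + (n - 1) * Pnum (n - 2) := by
  refine ⟨pnum_zero, pnum_one, fun n hn => ?_⟩
  obtain ⟨m, rfl⟩ : ∃ m, n = m + 2 := ⟨n - 2, by omega⟩
  simp only [Nat.add_sub_cancel, show m + 2 - 1 = m + 1 by omega]
  rw [pnum_eq, pnum_eq, pnum_eq, card_rec]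
end

section
/- For every real number x, the series Σ_{n=0}^{∞} ε_n·x^n/n! converges and its sum equals e^{2x + x²/2}, where ε_n is the number of skew-symmetric (n,n)-clans in the largest sect. -/
def MP (n : ℕ) (x : Equiv.Perm (Fin n) × (Fin n → Bool)) : Prop :=
  Function.Involutive ⇑x.1 ∧ ∀ i, x.1 i ≠ i → x.2 i = true

section ModelCount
open Equiv Function

noncomputable def mnum (n : ℕ) : ℕ :=
  Nat.card {x : Equiv.Perm (Fin n) × (Fin n → Bool) // MP n x}

lemma nat_card_sigma {ι : Type*} [Fintype ι] (f : ι → Type*) [∀ i, Finite (f i)] :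
    Nat.card (Σ i, f i) = ∑ i, Nat.card (f i) := by
  classical
  letI : ∀ i, Fintype (f i) := fun i => Fintype.ofFinite _
  simp [Nat.card_eq_fintype_card]

lemma mnum_zero : mnum 0 = 1 := by
  haveI : Unique {x : Equiv.Perm (Fin 0) × (Fin 0 → Bool) // MP 0 x} := by
    refine ⟨⟨⟨(1, fun i => i.elim0), ⟨fun i => i.elim0, fun i => i.elim0⟩⟩⟩, ?_⟩
    rintro ⟨⟨e, c⟩, h⟩
    refine Subtype.ext (Prod.ext ?_ ?_)
    · exact Equiv.ext fun i => i.elim0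
    · exact funext fun i => i.elim0
  exact Nat.card_unique

lemma mnum_one : mnum 1 = 2 := by
  have E : {x : Equiv.Perm (Fin 1) × (Fin 1 → Bool) // MP 1 x} ≃ Bool := {
    toFun := fun x => x.1.2 0
    invFun := fun b => ⟨(1, fun _ => b), ⟨fun i => rfl, fun i hi => absurd (Subsingleton.elim _ _) hi⟩⟩
    left_inv := by
      rintro ⟨⟨e, c⟩, h⟩
      refine Subtype.ext (Prod.ext (Subsingleton.elim _ _) (funext fun i => ?_))
      have : i = 0 := Subsingleton.elim _ _
      rw [this]
    right_inv := fun b => rfl }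
  rw [mnum, Nat.card_congr E, Nat.card_eq_fintype_card]
  simp

section Rec
variable {n : ℕ}

local notation "D" => Equiv.Perm.decomposeFin.symm

lemma D_zero (p : Fin (n+1)) (e : Equiv.Perm (Fin n)) : D (p, e) 0 = p :=
  Equiv.Perm.decomposeFin_symm_apply_zero p e

lemma D_succ (p : Fin (n+1)) (e : Equiv.Perm (Fin n)) (i : Fin n) :
    D (p, e) i.succ = Equiv.swap 0 p (e i).succ :=
  Equiv.Perm.decomposeFin_symm_apply_succ e p i

lemma D0_succ (e : Equiv.Perm (Fin n)) (i : Fin n) : D (0, e) i.succ = (e i).succ := by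
  rw [D_succ, Equiv.swap_self, Equiv.refl_apply]

lemma invol_D0_iff (e : Equiv.Perm (Fin n)) :
    Function.Involutive ⇑(D ((0 : Fin (n+1)), e)) ↔ Function.Involutive ⇑e := by
  constructor
  · intro h i
    have := h i.succ
    rw [D0_succ, D0_succ] at this
    exact Fin.succ_injective _ this
  · intro h p
    induction p using Fin.cases with
    | zero => rw [D_zero, D_zero]
    | succ i => rw [D0_succ, D0_succ, h i]

lemma MP0_iff (e : Equiv.Perm (Fin (n+1))) (c : Fin (n+2) → Bool) :
    MP (n+2) (D ((0 : Fin (n+2)), e), c) ↔ MP (n+1) (e, fun i => c i.succ) := by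
  constructor
  · rintro ⟨h1, h2⟩
    refine ⟨(invol_D0_iff e).1 h1, fun i hi => ?_⟩
    refine h2 i.succ fun hh => hi ?_
    rw [D0_succ] at hh
    exact Fin.succ_injective _ hh
  · rintro ⟨h1, h2⟩
    refine ⟨(invol_D0_iff e).2 h1, fun p hp => ?_⟩
    induction p using Fin.cases with
    | zero => exact absurd (D_zero 0 e) hp
    | succ i =>
      refine h2 i fun hh => hp ?_
      rw [D0_succ, hh]

/-- The swap `swap 0 q.succ` fixes `y.succ` when `y ≠ q`. -/
lemma swap_succ_fix (q : Fin (n+1)) (y : Fin (n+1)) (hy : y ≠ q) :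
    Equiv.swap 0 q.succ y.succ = y.succ :=
  Equiv.swap_apply_of_ne_of_ne (Fin.succ_ne_zero y) (fun h => hy (Fin.succ_injective _ h))

lemma Dq_succ_of_ne (q : Fin (n+1)) (e : Equiv.Perm (Fin (n+1))) (i : Fin (n+1))
    (h : e i ≠ q) : D (q.succ, e) i.succ = (e i).succ := by
  rw [D_succ]
  exact swap_succ_fix q (e i) h

lemma Dq_succ_of_eq (q : Fin (n+1)) (e : Equiv.Perm (Fin (n+1))) (i : Fin (n+1))
    (h : e i = q) : D (q.succ, e) i.succ = 0 := by
  rw [D_succ, h, Equiv.swap_apply_right]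

lemma MPsucc_iff (q : Fin (n+1)) (e : Equiv.Perm (Fin (n+1))) (c : Fin (n+2) → Bool) :
    MP (n+2) (D (q.succ, e), c) ↔
      (Function.Involutive ⇑e ∧ e q = q ∧ c q.succ = true) ∧
      (c 0 = true ∧ ∀ i, e i ≠ i → c i.succ = true) := by
  constructor
  · rintro ⟨h1, h2⟩
    have heq : e q = q := by
      have h0 := h1 0
      rw [D_zero] at h0
      by_contra hne
      rw [Dq_succ_of_ne q e q hne] at h0
      exact Fin.succ_ne_zero _ h0
    have hqs : D (q.succ, e) q.succ = 0 := Dq_succ_of_eq q e q heq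
    have hinv : Function.Involutive ⇑e := by
      intro i
      by_cases hiq : e i = q
      · have : i = q := e.injective (by rw [hiq, heq])
        rw [this, heq, heq]
      · have hh := h1 i.succ
        rw [Dq_succ_of_ne q e i hiq] at hh
        by_cases h2q : e (e i) = q
        · rw [Dq_succ_of_eq q e (e i) h2q] at hh
          exact absurd hh.symm (Fin.succ_ne_zero i)
        · rw [Dq_succ_of_ne q e (e i) h2q] at hh
          exact Fin.succ_injective _ hh
    refine ⟨⟨hinv, heq, ?_⟩, ?_, ?_⟩
    · exact h2 q.succ (by rw [hqs]; exact (Fin.succ_ne_zero q).symm)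
    · exact h2 0 (by rw [D_zero]; exact Fin.succ_ne_zero q)
    · intro i hi
      have hiq : e i ≠ q := fun h => hi (by rw [← heq] at h; rw [e.injective h, heq])
      exact h2 i.succ (by rw [Dq_succ_of_ne q e i hiq]; exact fun h => hi (Fin.succ_injective _ h))
  · rintro ⟨⟨h1, heq, hcq⟩, hc0, hc⟩
    constructor
    · intro p
      induction p using Fin.cases with
      | zero => rw [D_zero, Dq_succ_of_eq q e q heq]
      | succ i =>
        by_cases hiq : e i = q
        · have : i = q := by rw [← h1 i, hiq, heq]
          rw [this, Dq_succ_of_eq q e q heq, D_zero]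
        · rw [Dq_succ_of_ne q e i hiq, Dq_succ_of_ne q e (e i) (by rw [h1 i]; exact fun h => hiq (by rw [h, heq])), h1 i]
    · intro p hp
      induction p using Fin.cases with
      | zero => exact hc0
      | succ i =>
        by_cases hiq : i = q
        · rw [hiq]; exact hcq
        · have heiq : e i ≠ q := fun h => hiq (by rw [← h1 i, h, heq])
          refine hc i fun h => hp ?_
          rw [Dq_succ_of_ne q e i heiq, h]

def sigmaEquiv (n : ℕ) : {x : Equiv.Perm (Fin (n+2)) × (Fin (n+2) → Bool) // MP (n+2) x} ≃
    Σ p : Fin (n+2), {w : Equiv.Perm (Fin (n+1)) × (Fin (n+2) → Bool) //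
      MP (n+2) (D (p, w.1), w.2)} where
  toFun x := ⟨(Equiv.Perm.decomposeFin x.1.1).1, ⟨((Equiv.Perm.decomposeFin x.1.1).2, x.1.2), by
    rcases x with ⟨⟨τ, c⟩, h⟩
    simpa using h⟩⟩
  invFun y := ⟨(D (y.1, y.2.1.1), y.2.1.2), y.2.2⟩
  left_inv x := by
    rcases x with ⟨⟨τ, c⟩, h⟩
    refine Subtype.ext (Prod.ext ?_ rfl)
    simp
  right_inv y := by
    rcases y with ⟨p, ⟨⟨e, c⟩, h⟩⟩
    have hde : Equiv.Perm.decomposeFin (D (p, e)) = (p, e) :=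
      Equiv.Perm.decomposeFin.apply_symm_apply (p, e)
    have h1 : (Equiv.Perm.decomposeFin (D (p, e))).1 = p := by rw [hde]
    have h2 : (Equiv.Perm.decomposeFin (D (p, e))).2 = e := by rw [hde]
    refine Sigma.ext h1 ?_
    rw [Subtype.heq_iff_coe_eq (fun w => by
      show MP (n+2) (D ((Equiv.Perm.decomposeFin (D (p, e))).1, w.1), w.2) ↔
        MP (n+2) (D (p, w.1), w.2)
      rw [h1])]
    show ((Equiv.Perm.decomposeFin (D (p, e))).2, c) = (e, c)
    rw [h2]

def fiber0Equiv (n : ℕ) :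
    {w : Equiv.Perm (Fin (n+1)) × (Fin (n+2) → Bool) //
      MP (n+2) (D ((0 : Fin (n+2)), w.1), w.2)} ≃
    Bool × {x : Equiv.Perm (Fin (n+1)) × (Fin (n+1) → Bool) // MP (n+1) x} where
  toFun w := (w.1.2 0, ⟨(w.1.1, fun i => w.1.2 i.succ), (MP0_iff w.1.1 w.1.2).1 w.2⟩)
  invFun z := ⟨(z.2.1.1, Fin.cons z.1 z.2.1.2), by
    refine (MP0_iff _ _).2 ?_
    have : (fun i => Fin.cons (α := fun _ => Bool) z.1 z.2.1.2 i.succ) = z.2.1.2 := by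
      funext i; rw [Fin.cons_succ]
    rw [this]
    exact z.2.2⟩
  left_inv w := by
    rcases w with ⟨⟨e, c⟩, h⟩
    refine Subtype.ext (Prod.ext rfl ?_)
    funext p
    induction p using Fin.cases with
    | zero => simp
    | succ i => simp
  right_inv z := by
    rcases z with ⟨b, ⟨⟨e, c⟩, h⟩⟩
    refine Prod.ext (by simp) (Subtype.ext (Prod.ext rfl ?_))
    funext i
    simp

def Mfix (n : ℕ) (q : Fin n) : Type :=
  {x : Equiv.Perm (Fin n) × (Fin n → Bool) //
    (Function.Involutive ⇑x.1 ∧ x.1 q = q ∧ x.2 q = true) ∧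
    ∀ i, x.1 i ≠ i → x.2 i = true}

instance (n : ℕ) (q : Fin n) : Finite (Mfix n q) := by unfold Mfix; infer_instance

def fiberSuccEquiv (n : ℕ) (q : Fin (n+1)) :
    {w : Equiv.Perm (Fin (n+1)) × (Fin (n+2) → Bool) //
      MP (n+2) (D (q.succ, w.1), w.2)} ≃ Mfix (n+1) q where
  toFun w := ⟨(w.1.1, fun i => w.1.2 i.succ), by
    have h := (MPsucc_iff q w.1.1 w.1.2).1 w.2
    exact ⟨⟨h.1.1, h.1.2.1, h.1.2.2⟩, h.2.2⟩⟩
  invFun z := ⟨(z.1.1, Fin.cons true z.1.2), by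
    refine (MPsucc_iff _ _ _).2 ?_
    refine ⟨⟨z.2.1.1, z.2.1.2.1, ?_⟩, ?_, fun i hi => ?_⟩
    · show Fin.cons (α := fun _ => Bool) true z.1.2 q.succ = true
      rw [Fin.cons_succ]; exact z.2.1.2.2
    · show Fin.cons (α := fun _ => Bool) true z.1.2 0 = true
      rw [Fin.cons_zero]
    · show Fin.cons (α := fun _ => Bool) true z.1.2 i.succ = true
      rw [Fin.cons_succ]
      exact z.2.2 i hi⟩
  left_inv w := by
    rcases w with ⟨⟨e, c⟩, h⟩
    refine Subtype.ext (Prod.ext rfl ?_)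
    funext p
    induction p using Fin.cases with
    | zero =>
      show Fin.cons (α := fun _ => Bool) true (fun i => c i.succ) 0 = c 0
      rw [Fin.cons_zero]
      exact (((MPsucc_iff q e c).1 h).2.1).symm
    | succ i =>
      show Fin.cons (α := fun _ => Bool) true (fun i => c i.succ) i.succ = c i.succ
      rw [Fin.cons_succ]
  right_inv z := by
    rcases z with ⟨⟨e, c⟩, h⟩
    refine Subtype.ext (Prod.ext rfl ?_)
    funext i
    simp

def conjFun (n : ℕ) (q : Fin (n+1)) (x : Equiv.Perm (Fin (n+1)) × (Fin (n+1) → Bool)) :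
    Equiv.Perm (Fin (n+1)) × (Fin (n+1) → Bool) :=
  (((Equiv.swap (0 : Fin (n+1)) q).trans x.1).trans (Equiv.swap 0 q),
    fun i => x.2 (Equiv.swap (0 : Fin (n+1)) q i))

lemma conjFun_mem (n : ℕ) (q : Fin (n+1)) (e : Equiv.Perm (Fin (n+1))) (c : Fin (n+1) → Bool)
    (h1 : Function.Involutive ⇑e) (h2 : e q = q) (h3 : c q = true)
    (h4 : ∀ i, e i ≠ i → c i = true) :
    Function.Involutive ⇑(conjFun n q (e, c)).1 ∧ (conjFun n q (e, c)).1 0 = 0 ∧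
      (conjFun n q (e, c)).2 0 = true ∧
      ∀ i, (conjFun n q (e, c)).1 i ≠ i → (conjFun n q (e, c)).2 i = true := by
  refine ⟨fun i => ?_, ?_, ?_, fun i hi => ?_⟩
  · show Equiv.swap 0 q (e (Equiv.swap 0 q (Equiv.swap 0 q (e (Equiv.swap 0 q i))))) = i
    rw [Equiv.swap_apply_self, h1, Equiv.swap_apply_self]
  · show Equiv.swap 0 q (e (Equiv.swap 0 q 0)) = 0
    rw [Equiv.swap_apply_left, h2, Equiv.swap_apply_right]
  · show c (Equiv.swap 0 q 0) = true
    rw [Equiv.swap_apply_left]; exact h3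
  · show c (Equiv.swap 0 q i) = true
    refine h4 _ fun hh => hi ?_
    show Equiv.swap 0 q (e (Equiv.swap 0 q i)) = i
    rw [hh, Equiv.swap_apply_self]

lemma conjFun_mem' (n : ℕ) (q : Fin (n+1)) (e : Equiv.Perm (Fin (n+1))) (c : Fin (n+1) → Bool)
    (h1 : Function.Involutive ⇑e) (h2 : e 0 = 0) (h3 : c 0 = true)
    (h4 : ∀ i, e i ≠ i → c i = true) :
    Function.Involutive ⇑(conjFun n q (e, c)).1 ∧ (conjFun n q (e, c)).1 q = q ∧
      (conjFun n q (e, c)).2 q = true ∧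
      ∀ i, (conjFun n q (e, c)).1 i ≠ i → (conjFun n q (e, c)).2 i = true := by
  refine ⟨fun i => ?_, ?_, ?_, fun i hi => ?_⟩
  · show Equiv.swap 0 q (e (Equiv.swap 0 q (Equiv.swap 0 q (e (Equiv.swap 0 q i))))) = i
    rw [Equiv.swap_apply_self, h1, Equiv.swap_apply_self]
  · show Equiv.swap 0 q (e (Equiv.swap 0 q q)) = q
    rw [Equiv.swap_apply_right, h2, Equiv.swap_apply_left]
  · show c (Equiv.swap 0 q q) = true
    rw [Equiv.swap_apply_right]; exact h3
  · show c (Equiv.swap 0 q i) = true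
    refine h4 _ fun hh => hi ?_
    show Equiv.swap 0 q (e (Equiv.swap 0 q i)) = i
    rw [hh, Equiv.swap_apply_self]

lemma conjFun_invol (n : ℕ) (q : Fin (n+1)) (x : Equiv.Perm (Fin (n+1)) × (Fin (n+1) → Bool)) :
    conjFun n q (conjFun n q x) = x := by
  obtain ⟨e, c⟩ := x
  refine Prod.ext (Equiv.ext fun i => ?_) (funext fun i => ?_)
  · show Equiv.swap 0 q ((Equiv.swap 0 q (e (Equiv.swap 0 q (Equiv.swap 0 q i))))) = e i
    rw [Equiv.swap_apply_self, Equiv.swap_apply_self]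
  · show c (Equiv.swap 0 q (Equiv.swap 0 q i)) = c i
    rw [Equiv.swap_apply_self]

def MfixConjEquiv (n : ℕ) (q : Fin (n+1)) : Mfix (n+1) q ≃ Mfix (n+1) 0 where
  toFun z := ⟨conjFun n q z.1, by
    obtain ⟨h, h4⟩ := z.2
    have hc := conjFun_mem n q z.1.1 z.1.2 h.1 h.2.1 h.2.2 h4
    exact ⟨⟨hc.1, hc.2.1, hc.2.2.1⟩, hc.2.2.2⟩⟩
  invFun z := ⟨conjFun n q z.1, by
    obtain ⟨h, h4⟩ := z.2
    have hc := conjFun_mem' n q z.1.1 z.1.2 h.1 h.2.1 h.2.2 h4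
    exact ⟨⟨hc.1, hc.2.1, hc.2.2.1⟩, hc.2.2.2⟩⟩
  left_inv z := Subtype.ext (conjFun_invol n q z.1)
  right_inv z := Subtype.ext (conjFun_invol n q z.1)

lemma fix0_decomp {n : ℕ} (e : Equiv.Perm (Fin (n+1))) (h : e 0 = 0) :
    D ((0 : Fin (n+1)), (Equiv.Perm.decomposeFin e).2) = e := by
  have h0 : (Equiv.Perm.decomposeFin e).1 = e 0 := by
    have hh := D_zero (Equiv.Perm.decomposeFin e).1 (Equiv.Perm.decomposeFin e).2
    rw [Prod.mk.eta, Equiv.Perm.decomposeFin.symm_apply_apply] at hh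
    exact hh.symm
  have hpair : ((0 : Fin (n+1)), (Equiv.Perm.decomposeFin e).2) = Equiv.Perm.decomposeFin e := by
    rw [← Prod.mk.eta (p := Equiv.Perm.decomposeFin e), h0, h]
  rw [hpair, Equiv.Perm.decomposeFin.symm_apply_apply]

def Mfix0Equiv (n : ℕ) : Mfix (n+1) 0 ≃
    {x : Equiv.Perm (Fin n) × (Fin n → Bool) // MP n x} where
  toFun z := ⟨((Equiv.Perm.decomposeFin z.1.1).2, fun i => z.1.2 i.succ), by
    have hd := fix0_decomp z.1.1 z.2.1.2.1
    have h1 : Function.Involutive ⇑z.1.1 := z.2.1.1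
    have h4 : ∀ i, z.1.1 i ≠ i → z.1.2 i = true := z.2.2
    constructor
    · intro i
      have hh : z.1.1 (z.1.1 i.succ) = i.succ := h1 i.succ
      rw [← hd, D0_succ, D0_succ] at hh
      exact Fin.succ_injective _ hh
    · intro i hi
      refine h4 i.succ fun hh => hi ?_
      rw [← hd, D0_succ] at hh
      exact Fin.succ_injective _ hh⟩
  invFun z := ⟨(D ((0 : Fin (n+1)), z.1.1), Fin.cons true z.1.2), by
    refine ⟨⟨(invol_D0_iff z.1.1).2 z.2.1, D_zero 0 z.1.1, ?_⟩, fun p hp => ?_⟩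
    · show Fin.cons (α := fun _ => Bool) true z.1.2 0 = true
      rw [Fin.cons_zero]
    · induction p using Fin.cases with
      | zero => exact absurd (D_zero 0 z.1.1) hp
      | succ i =>
        show Fin.cons (α := fun _ => Bool) true z.1.2 i.succ = true
        rw [Fin.cons_succ]
        refine z.2.2 i fun hh => hp ?_
        show ⇑(D ((0 : Fin (n+1)), z.1.1)) i.succ = i.succ
        rw [D0_succ, hh]⟩
  left_inv z := by
    rcases z with ⟨⟨e, c⟩, ⟨h1, h2, h3⟩, h4⟩
    have h2' : e 0 = 0 := h2
    have h3' : c 0 = true := h3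
    refine Subtype.ext (Prod.ext (fix0_decomp e h2') ?_)
    funext p
    induction p using Fin.cases with
    | zero =>
      show Fin.cons (α := fun _ => Bool) true (fun i => c i.succ) 0 = c 0
      rw [Fin.cons_zero, h3']
    | succ i =>
      show Fin.cons (α := fun _ => Bool) true (fun i => c i.succ) i.succ = c i.succ
      rw [Fin.cons_succ]
  right_inv z := by
    rcases z with ⟨⟨e, c⟩, h⟩
    refine Subtype.ext (Prod.ext ?_ ?_)
    · show (Equiv.Perm.decomposeFin (D ((0:Fin (n+1)), e))).2 = e
      rw [Equiv.Perm.decomposeFin.apply_symm_apply]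
    · funext i
      show Fin.cons (α := fun _ => Bool) true c i.succ = c i
      rw [Fin.cons_succ]

lemma mnum_rec (n : ℕ) : mnum (n+2) = 2 * mnum (n+1) + (n+1) * mnum n := by
  have h1 : mnum (n+2) = Nat.card (Σ p : Fin (n+2),
      {w : Equiv.Perm (Fin (n+1)) × (Fin (n+2) → Bool) // MP (n+2) (D (p, w.1), w.2)}) :=
    Nat.card_congr (sigmaEquiv n)
  rw [h1, nat_card_sigma, Fin.sum_univ_succ]
  have h2 : Nat.card {w : Equiv.Perm (Fin (n+1)) × (Fin (n+2) → Bool) //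
      MP (n+2) (D ((0 : Fin (n+2)), w.1), w.2)} = 2 * mnum (n+1) := by
    rw [Nat.card_congr (fiber0Equiv n), Nat.card_prod]
    simp [mnum]
  have h3 : ∀ q : Fin (n+1), Nat.card {w : Equiv.Perm (Fin (n+1)) × (Fin (n+2) → Bool) //
      MP (n+2) (D (q.succ, w.1), w.2)} = mnum n := by
    intro q
    rw [Nat.card_congr ((fiberSuccEquiv n q).trans ((MfixConjEquiv n q).trans (Mfix0Equiv n)))]
    rfl
  rw [h2]
  simp only [h3]
  simp [Finset.sum_const, mul_comm]

end Rec

end ModelCount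

section ClanBij
open Equiv Function

section ClanEquiv
variable {n : ℕ}

def posA (i : Fin n) : Fin (2*n) := ⟨i.val, by have := i.isLt; omega⟩
def posB (i : Fin n) : Fin (2*n) := ⟨2*n - i.val - 1, by have := i.isLt; omega⟩

lemma posA_val (i : Fin n) : (posA i).val = i.val := rfl
lemma posB_val (i : Fin n) : (posB i).val = 2*n - i.val - 1 := rfl
lemma posA_lt (i : Fin n) : (posA i).val < n := i.isLt
lemma posB_not_lt (i : Fin n) : ¬ (posB i).val < n := by
  have := i.isLt; simp only [posB_val]; omega
lemma posA_ne_posB (i j : Fin n) : posA i ≠ posB j := by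
  intro h
  have h1 := posA_lt i
  rw [h] at h1
  exact posB_not_lt j h1
lemma posA_inj {i j : Fin n} (h : posA i = posA j) : i = j :=
  Fin.ext (by rw [← posA_val i, ← posA_val j, h])
lemma posB_inj {i j : Fin n} (h : posB i = posB j) : i = j := by
  have := congrArg Fin.val h
  simp only [posB_val] at this
  have hi := i.isLt; have hj := j.isLt
  exact Fin.ext (by omega)
lemma rev_posA (i : Fin n) : Fin.rev (posA i) = posB i := by
  refine Fin.ext ?_
  rw [Fin.val_rev, posA_val, posB_val]
  have := i.isLt; omega
lemma rev_posB (i : Fin n) : Fin.rev (posB i) = posA i := by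
  rw [← rev_posA, Fin.rev_rev]
lemma pos_cases (p : Fin (2*n)) : (∃ i, p = posA i) ∨ (∃ i, p = posB i) := by
  by_cases hp : p.val < n
  · exact Or.inl ⟨⟨p.val, hp⟩, Fin.ext rfl⟩
  · have := p.isLt
    exact Or.inr ⟨⟨2*n - p.val - 1, by omega⟩, Fin.ext (by simp only [posB_val]; omega)⟩

/-! Forward map: from a clan to a signed involution of `Fin n`. -/

def tmapF (σ : Equiv.Perm (Fin (2*n))) (i : Fin n) : Fin n :=
  if h : (σ (posA i)).val < n then i
  else ⟨2*n - (σ (posA i)).val - 1, by omega⟩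

def cmapF (σ : Equiv.Perm (Fin (2*n))) (i : Fin n) : Bool := decide (σ (posA i) ≠ posA i)

section Forward
variable {σ : Equiv.Perm (Fin (2*n))} {s : Fin (2*n) → Bool}
  (hL : IsLargestSectClan n σ s)
include hL

lemma fix_of_lt (i : Fin n) (h : (σ (posA i)).val < n) : σ (posA i) = posA i := by
  by_contra hne
  exact ((hL.2.2 (posA i) hne).1 (posA_lt i)) h

omit hL in
lemma tmapF_of_fix (i : Fin n) (h : σ (posA i) = posA i) : tmapF σ i = i := by
  rw [tmapF, dif_pos (by rw [h]; exact posA_lt i)]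

lemma tmapF_of_nfix (i : Fin n) (h : σ (posA i) ≠ posA i) :
    posB (tmapF σ i) = σ (posA i) := by
  have hge : ¬ (σ (posA i)).val < n := fun hlt => h (fix_of_lt hL i hlt)
  rw [tmapF, dif_neg hge]
  have := (σ (posA i)).isLt
  exact Fin.ext (by simp only [posB_val]; omega)

lemma tmapF_invol : Function.Involutive (tmapF σ) := by
  intro i
  by_cases h : σ (posA i) = posA i
  · rw [tmapF_of_fix i h, tmapF_of_fix i h]
  · have hB := tmapF_of_nfix hL i h
    set j := tmapF σ i with hj
    have haj : posA j = Fin.rev (σ (posA i)) := by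
      rw [← rev_posB, hB]
    have hsj : σ (posA j) = posB i := by
      rw [haj, hL.1.2.2.2.1 (σ (posA i)), hL.1.1 (posA i), rev_posA]
    have hne : σ (posA j) ≠ posA j := by
      rw [hsj]; exact fun hcontra => posA_ne_posB j i hcontra.symm
    have := tmapF_of_nfix hL j hne
    rw [hsj] at this
    exact posB_inj this

omit hL in
lemma cmapF_norm : ∀ i, tmapF σ i ≠ i → cmapF σ i = true := by
  intro i hi
  rw [cmapF, decide_eq_true_eq]
  intro h
  exact hi (tmapF_of_fix i h)


end Forward

/-! Backward map: from a signed involution of `Fin n` to a clan. -/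

def idxB (p : Fin (2*n)) (hp : ¬ p.val < n) : Fin n :=
  ⟨2*n - p.val - 1, by have := p.isLt; omega⟩

def sigF (τ : Equiv.Perm (Fin n)) (c : Fin n → Bool) (p : Fin (2*n)) : Fin (2*n) :=
  if hp : p.val < n then
    (if τ ⟨p.val, hp⟩ = ⟨p.val, hp⟩ ∧ c ⟨p.val, hp⟩ = false then p
     else posB (τ ⟨p.val, hp⟩))
  else
    (if τ (idxB p hp) = idxB p hp ∧ c (idxB p hp) = false then p
     else posA (τ (idxB p hp)))

def sF (τ : Equiv.Perm (Fin n)) (c : Fin n → Bool) (p : Fin (2*n)) : Bool :=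
  if hp : p.val < n then
    (if τ ⟨p.val, hp⟩ = ⟨p.val, hp⟩ ∧ c ⟨p.val, hp⟩ = false then false else true)
  else true

section Backward
variable (τ : Equiv.Perm (Fin n)) (c : Fin n → Bool)

lemma idxB_posB (i : Fin n) : idxB (posB i) (posB_not_lt i) = i := by
  have := i.isLt
  exact Fin.ext (by simp only [idxB, posB_val]; omega)

lemma sigF_posA (i : Fin n) :
    sigF τ c (posA i) = if τ i = i ∧ c i = false then posA i else posB (τ i) := by
  rw [sigF, dif_pos (posA_lt i)]
  rfl

lemma sigF_posB (i : Fin n) :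
    sigF τ c (posB i) = if τ i = i ∧ c i = false then posB i else posA (τ i) := by
  rw [sigF, dif_neg (posB_not_lt i), idxB_posB]

lemma sF_posA (i : Fin n) :
    sF τ c (posA i) = if τ i = i ∧ c i = false then false else true := by
  rw [sF, dif_pos (posA_lt i)]
  rfl

lemma sF_posB (i : Fin n) : sF τ c (posB i) = true := by
  rw [sF, dif_neg (posB_not_lt i)]

variable (hM : MP n (τ, c))
include hM

lemma sigF_invol : Function.Involutive (sigF τ c) := by
  have h1 : Function.Involutive ⇑τ := hM.1
  have h2 : ∀ i, τ i ≠ i → c i = true := hM.2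
  intro p
  rcases pos_cases p with ⟨i, rfl⟩ | ⟨i, rfl⟩
  · rw [sigF_posA]
    split_ifs with h
    · rw [sigF_posA, if_pos h]
    · rw [sigF_posB]
      have hcond : ¬ (τ (τ i) = τ i ∧ c (τ i) = false) := by
        rintro ⟨ha, hb⟩
        rw [h1 i] at ha
        refine h ⟨ha.symm, ?_⟩
        rwa [← ha] at hb
      rw [if_neg hcond, h1 i]
  · rw [sigF_posB]
    split_ifs with h
    · rw [sigF_posB, if_pos h]
    · rw [sigF_posA]
      have hcond : ¬ (τ (τ i) = τ i ∧ c (τ i) = false) := by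
        rintro ⟨ha, hb⟩
        rw [h1 i] at ha
        refine h ⟨ha.symm, ?_⟩
        rwa [← ha] at hb
      rw [if_neg hcond, h1 i]

omit hM in
lemma sigF_norm : ∀ p, sigF τ c p ≠ p → sF τ c p = true := by
  intro p hp
  rcases pos_cases p with ⟨i, rfl⟩ | ⟨i, rfl⟩
  · rw [sF_posA]
    rw [sigF_posA] at hp
    split_ifs with h
    · exact absurd (if_pos h) hp
    · rfl
  · exact sF_posB τ c i

omit hM in
lemma sigF_skew : ∀ p, sigF τ c (Fin.rev p) = Fin.rev (sigF τ c p) := by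
  intro p
  rcases pos_cases p with ⟨i, rfl⟩ | ⟨i, rfl⟩
  · rw [rev_posA, sigF_posB, sigF_posA]
    split_ifs with h
    · rw [rev_posA]
    · rw [rev_posB]
  · rw [rev_posB, sigF_posA, sigF_posB]
    split_ifs with h
    · rw [rev_posB]
    · rw [rev_posA]

omit hM in
lemma sigF_fix_iff (i : Fin n) :
    sigF τ c (posA i) = posA i ↔ (τ i = i ∧ c i = false) := by
  rw [sigF_posA]
  constructor
  · intro h
    by_contra hc
    rw [if_neg hc] at h
    exact posA_ne_posB i (τ i) h.symm
  · intro h; rw [if_pos h]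

omit hM in
lemma sigF_fixB_iff (i : Fin n) :
    sigF τ c (posB i) = posB i ↔ (τ i = i ∧ c i = false) := by
  rw [sigF_posB]
  constructor
  · intro h
    by_contra hc
    rw [if_neg hc] at h
    exact posA_ne_posB (τ i) i h
  · intro h; rw [if_pos h]

omit hM in
lemma sigF_flip : ∀ p, sigF τ c p = p → sF τ c (Fin.rev p) = !(sF τ c p) := by
  intro p hp
  rcases pos_cases p with ⟨i, rfl⟩ | ⟨i, rfl⟩
  · have h := (sigF_fix_iff τ c i).1 hp
    rw [rev_posA, sF_posB, sF_posA, if_pos h]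
    rfl
  · have h := (sigF_fixB_iff τ c i).1 hp
    rw [rev_posB, sF_posA, sF_posB, if_pos h]
    rfl

omit hM in
lemma card_balanced (σ' : Equiv.Perm (Fin (2*n))) (s' : Fin (2*n) → Bool)
    (hskew : ∀ p, σ' (Fin.rev p) = Fin.rev (σ' p))
    (hflip : ∀ p, σ' p = p → s' (Fin.rev p) = !(s' p)) :
    (Finset.univ.filter (fun p => σ' p = p ∧ s' p = true)).card =
      (Finset.univ.filter (fun p => σ' p = p ∧ s' p = false)).card := by
  have key : ∀ (p : Fin (2*n)) (b : Bool), σ' p = p ∧ s' p = b →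
      σ' (Fin.rev p) = Fin.rev p ∧ s' (Fin.rev p) = !b := by
    intro p b ⟨h1, h2⟩
    exact ⟨by rw [hskew, h1], by rw [hflip p h1, h2]⟩
  refine Finset.card_bij' (fun p _ => Fin.rev p) (fun p _ => Fin.rev p) ?_ ?_ ?_ ?_
  · intro a ha
    simp only [Finset.mem_filter, Finset.mem_univ, true_and] at ha ⊢
    have := key a true ha
    rwa [Bool.not_true] at this
  · intro a ha
    simp only [Finset.mem_filter, Finset.mem_univ, true_and] at ha ⊢
    have := key a false ha
    rwa [Bool.not_false] at this
  · intro a _; exact Fin.rev_rev a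
  · intro a _; exact Fin.rev_rev a

omit hM in
lemma sigF_sect1 : ∀ p, sigF τ c p = p → (sF τ c p = false ↔ p.val < n) := by
  intro p hp
  rcases pos_cases p with ⟨i, rfl⟩ | ⟨i, rfl⟩
  · have h := (sigF_fix_iff τ c i).1 hp
    rw [sF_posA, if_pos h]
    simp [posA_lt i]
  · rw [sF_posB]
    simp [posB_not_lt i]

omit hM in
lemma sigF_sect2 : ∀ p, sigF τ c p ≠ p → (p.val < n ↔ ¬ (sigF τ c p).val < n) := by
  intro p hp
  rcases pos_cases p with ⟨i, rfl⟩ | ⟨i, rfl⟩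
  · rw [sigF_posA] at hp ⊢
    split_ifs with h
    · exact absurd (if_pos h) hp
    · simp [posA_lt i, posB_not_lt (τ i)]
  · rw [sigF_posB] at hp ⊢
    split_ifs with h
    · exact absurd (if_pos h) hp
    · simp [posA_lt (τ i), posB_not_lt i]

lemma backward_isClan :
    IsLargestSectClan n ((Function.Involutive.toPerm (sigF τ c) (sigF_invol τ c hM))) (sF τ c) := by
  refine ⟨⟨?_, ?_, ?_, ?_, ?_⟩, ?_, ?_⟩
  · exact sigF_invol τ c hM
  · exact sigF_norm τ c
  · exact card_balanced (Function.Involutive.toPerm (sigF τ c) (sigF_invol τ c hM)) (sF τ c)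
      (sigF_skew τ c) (sigF_flip τ c)
  · exact sigF_skew τ c
  · exact sigF_flip τ c
  · exact sigF_sect1 τ c
  · exact sigF_sect2 τ c


lemma roundtrip2_t : ∀ i, tmapF ((Function.Involutive.toPerm (sigF τ c) (sigF_invol τ c hM))) i = τ i := by
  intro i
  have hL' := backward_isClan τ c hM
  by_cases hfree : τ i = i ∧ c i = false
  · have hfix : (Function.Involutive.toPerm (sigF τ c) (sigF_invol τ c hM)) (posA i) = posA i := by
      show sigF τ c (posA i) = posA i
      rw [sigF_posA, if_pos hfree]
    rw [tmapF_of_fix i hfix, hfree.1]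
  · have hval : (Function.Involutive.toPerm (sigF τ c) (sigF_invol τ c hM)) (posA i) = posB (τ i) := by
      show sigF τ c (posA i) = posB (τ i)
      rw [sigF_posA, if_neg hfree]
    have hne : (Function.Involutive.toPerm (sigF τ c) (sigF_invol τ c hM)) (posA i) ≠ posA i := by
      rw [hval]
      exact fun hcontra => posA_ne_posB i (τ i) hcontra.symm
    have := tmapF_of_nfix hL' i hne
    rw [hval] at this
    exact posB_inj this

lemma roundtrip2_c : ∀ i, cmapF ((Function.Involutive.toPerm (sigF τ c) (sigF_invol τ c hM))) i = c i := by
  intro i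
  by_cases hfree : τ i = i ∧ c i = false
  · have hfix : sigF τ c (posA i) = posA i := by
      rw [sigF_posA, if_pos hfree]
    rw [hfree.2, cmapF]
    simp only [decide_eq_false_iff_not, ne_eq, not_not]
    exact hfix
  · have hval : sigF τ c (posA i) = posB (τ i) := by
      rw [sigF_posA, if_neg hfree]
    have hci : c i = true := by
      by_cases hti : τ i = i
      · cases hb : c i with
        | false => exact absurd ⟨hti, hb⟩ hfree
        | true => rfl
      · exact hM.2 i hti
    rw [hci, cmapF]
    simp only [decide_eq_true_eq, ne_eq]
    show ¬ sigF τ c (posA i) = posA i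
    rw [hval]
    exact fun hcontra => posA_ne_posB i (τ i) hcontra.symm

end Backward

section RT1
variable {σ : Equiv.Perm (Fin (2*n))} {s : Fin (2*n) → Bool}
  (hL : IsLargestSectClan n σ s)
include hL

lemma roundtrip_sig : ∀ p, sigF (Function.Involutive.toPerm (tmapF σ) (tmapF_invol hL)) (cmapF σ) p = σ p := by
  intro p
  have hskew := hL.1.2.2.2.1
  rcases pos_cases p with ⟨i, rfl⟩ | ⟨i, rfl⟩
  · rw [sigF_posA]
    by_cases hfix : σ (posA i) = posA i
    · rw [if_pos ⟨tmapF_of_fix i hfix, by simp [cmapF, hfix]⟩, hfix]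
    · have hcond : ¬ ((Function.Involutive.toPerm (tmapF σ) (tmapF_invol hL)) i = i ∧ cmapF σ i = false) := by
        rintro ⟨-, hb⟩
        simp [cmapF, hfix] at hb
      rw [if_neg hcond]
      exact tmapF_of_nfix hL i hfix
  · rw [sigF_posB]
    by_cases hfix : σ (posA i) = posA i
    · rw [if_pos ⟨tmapF_of_fix i hfix, by simp [cmapF, hfix]⟩]
      have heq : σ (posB i) = posB i := by
        rw [← rev_posA, hskew, hfix, rev_posA]
      exact heq.symm
    · have hcond : ¬ ((Function.Involutive.toPerm (tmapF σ) (tmapF_invol hL)) i = i ∧ cmapF σ i = false) := by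
        rintro ⟨-, hb⟩
        simp [cmapF, hfix] at hb
      rw [if_neg hcond, ← rev_posB ((Function.Involutive.toPerm (tmapF σ) (tmapF_invol hL)) i)]
      show Fin.rev (posB (tmapF σ i)) = σ (posB i)
      rw [tmapF_of_nfix hL i hfix]
      conv_rhs => rw [← rev_posA i, hskew]

lemma roundtrip_s : ∀ p, sF (Function.Involutive.toPerm (tmapF σ) (tmapF_invol hL)) (cmapF σ) p = s p := by
  intro p
  rcases pos_cases p with ⟨i, rfl⟩ | ⟨i, rfl⟩
  · rw [sF_posA]
    by_cases hfix : σ (posA i) = posA i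
    · rw [if_pos ⟨tmapF_of_fix i hfix, by simp [cmapF, hfix]⟩]
      exact ((hL.2.1 _ hfix).2 (posA_lt i)).symm
    · have hcond : ¬ ((Function.Involutive.toPerm (tmapF σ) (tmapF_invol hL)) i = i ∧ cmapF σ i = false) := by
        rintro ⟨-, hb⟩
        simp [cmapF, hfix] at hb
      rw [if_neg hcond]
      exact (hL.1.2.1 _ hfix).symm
  · rw [sF_posB]
    by_cases hfixB : σ (posB i) = posB i
    · cases hb : s (posB i) with
      | false => exact absurd ((hL.2.1 _ hfixB).1 hb) (posB_not_lt i)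
      | true => rfl
    · exact (hL.1.2.1 _ hfixB).symm

end RT1

end ClanEquiv

def clanEquiv (n : ℕ) :
    {p : Equiv.Perm (Fin (2*n)) × (Fin (2*n) → Bool) // IsLargestSectClan n p.1 p.2} ≃
    {x : Equiv.Perm (Fin n) × (Fin n → Bool) // MP n x} where
  toFun z := ⟨((Function.Involutive.toPerm (tmapF z.1.1) (tmapF_invol z.2)), cmapF z.1.1),
    ⟨tmapF_invol z.2, cmapF_norm (σ := z.1.1)⟩⟩
  invFun z := ⟨((Function.Involutive.toPerm (sigF z.1.1 z.1.2) (sigF_invol z.1.1 z.1.2 z.2)), sF z.1.1 z.1.2),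
    backward_isClan z.1.1 z.1.2 z.2⟩
  left_inv z := by
    rcases z with ⟨⟨σ, s⟩, hL⟩
    refine Subtype.ext (Prod.ext (Equiv.ext fun p => ?_) (funext fun p => ?_))
    · exact roundtrip_sig hL p
    · exact roundtrip_s hL p
  right_inv z := by
    rcases z with ⟨⟨τ, c⟩, hM⟩
    refine Subtype.ext (Prod.ext (Equiv.ext fun i => ?_) (funext fun i => ?_))
    · exact roundtrip2_t τ c hM i
    · exact roundtrip2_c τ c hM i

end ClanBij

lemma epsnum_eq_mnum (n : ℕ) : epsnum n = mnum n := Nat.card_congr (clanEquiv n)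

section Coeffs
open Finset
open scoped Nat

noncomputable def Tco (n j : ℕ) : ℝ :=
  if 2*j ≤ n then (n ! : ℝ) / ((n - 2*j)! * 2^j * (j !)) * 2^(n-2*j) else 0

noncomputable def Eco (n : ℕ) : ℝ := ∑ j ∈ range (n+1), Tco n j

lemma Tco_succ (n j : ℕ) :
    Tco (n+2) (j+1) = 2 * Tco (n+1) (j+1) + (n+1) * Tco n j := by
  by_cases h : 2*j ≤ n
  · obtain ⟨m, rfl⟩ : ∃ m, n = m + 2*j := ⟨n - 2*j, by omega⟩
    rcases Nat.eq_zero_or_pos m with rfl | hm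
    · simp only [Tco, if_pos (by omega : 2*(j+1) ≤ 0 + 2*j + 2),
        if_neg (by omega : ¬ 2*(j+1) ≤ 0 + 2*j + 1), if_pos h]
      have h1 : (0:ℕ) + 2*j + 2 - 2*(j+1) = 0 := by omega
      have h2 : (0:ℕ) + 2*j - 2*j = 0 := by omega
      rw [h1, h2]
      have e1 : ((0 + 2*j + 2)! : ℝ) = (2*j+2) * ((2*j+1) * (0+2*j)!) := by
        push_cast [show (0:ℕ)+2*j+2 = (2*j+1)+1 by ring, Nat.factorial_succ]
        push_cast [show (0:ℕ)+2*j+1 = (0+2*j)+1 by ring, Nat.factorial_succ]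
        ring
      rw [e1]
      have e2 : ((j+1)! : ℝ) = (j+1) * (j !) := by
        push_cast [Nat.factorial_succ]; ring
      rw [e2]
      have f1 : ((0+2*j)! : ℝ) ≠ 0 := by positivity
      have f2 : (j ! : ℝ) ≠ 0 := by positivity
      field_simp
      push_cast
      ring
    · obtain ⟨m', rfl⟩ : ∃ m', m = m' + 1 := ⟨m - 1, by omega⟩
      simp only [Tco, if_pos (by omega : 2*(j+1) ≤ m'+1 + 2*j + 2),
        if_pos (by omega : 2*(j+1) ≤ m'+1 + 2*j + 1), if_pos h]
      have h1 : m'+1 + 2*j + 2 - 2*(j+1) = m'+1 := by omega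
      have h2 : m'+1 + 2*j + 1 - 2*(j+1) = m' := by omega
      have h3 : m'+1 + 2*j - 2*j = m'+1 := by omega
      rw [h1, h2, h3]
      have e1 : ((m'+1 + 2*j + 2)! : ℝ) = (m'+2*j+3) * ((m'+2*j+2) * ((m'+1+2*j) * ((m'+2*j)!))) := by
        push_cast [show m'+1+2*j+2 = (m'+2*j+2)+1 by ring, Nat.factorial_succ]
        push_cast [show m'+2*j+2 = (m'+1+2*j)+1 by ring, Nat.factorial_succ]
        push_cast [show m'+1+2*j = (m'+2*j)+1 by ring, Nat.factorial_succ]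
        ring
      have e1' : ((m'+1 + 2*j + 1)! : ℝ) = (m'+2*j+2) * ((m'+1+2*j) * ((m'+2*j)!)) := by
        push_cast [show m'+1+2*j+1 = (m'+1+2*j)+1 by ring, Nat.factorial_succ]
        push_cast [show m'+1+2*j = (m'+2*j)+1 by ring, Nat.factorial_succ]
        ring
      have e1'' : ((m'+1 + 2*j)! : ℝ) = (m'+1+2*j) * ((m'+2*j)!) := by
        push_cast [show m'+1+2*j = (m'+2*j)+1 by ring, Nat.factorial_succ]
        ring
      have e2 : ((j+1)! : ℝ) = (j+1) * (j !) := by push_cast [Nat.factorial_succ]; ring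
      have e3 : ((m'+1)! : ℝ) = (m'+1) * (m' !) := by push_cast [Nat.factorial_succ]; ring
      rw [e1, e1', e1'', e2, e3]
      have f1 : ((m'+2*j)! : ℝ) ≠ 0 := by positivity
      have f2 : (j ! : ℝ) ≠ 0 := by positivity
      have f3 : (m' ! : ℝ) ≠ 0 := by positivity
      field_simp
      push_cast
      ring
  · have t1 : Tco (n+2) (j+1) = 0 := if_neg (by omega)
    have t2 : Tco (n+1) (j+1) = 0 := if_neg (by omega)
    have t3 : Tco n j = 0 := if_neg (by omega)
    rw [t1, t2, t3]; ring

lemma Tco_zero_right (n : ℕ) : Tco (n+1) 0 = 2 * Tco n 0 := by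
  simp only [Tco, if_pos (by omega : 2*0 ≤ n+1), if_pos (by omega : 2*0 ≤ n)]
  have h1 : n + 1 - 2*0 = n+1 := by omega
  have h2 : n - 2*0 = n := by omega
  rw [h1, h2]
  have e : ((n+1)! : ℝ) = (n+1) * (n !) := by push_cast [Nat.factorial_succ]; ring
  rw [e]
  have f1 : ((n)! : ℝ) ≠ 0 := by positivity
  field_simp
  ring

lemma Tco_big (n j : ℕ) (h : n < 2*j) : Tco n j = 0 := if_neg (by omega)

lemma Eco_zero : Eco 0 = 1 := by norm_num [Eco, Tco]

lemma Eco_one : Eco 1 = 2 := by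
  rw [Eco]
  rw [show (1:ℕ)+1 = 2 by rfl, Finset.sum_range_succ, Finset.sum_range_one]
  rw [Tco_big 1 1 (by omega)]
  norm_num [Tco]

lemma Eco_rec (n : ℕ) : Eco (n+2) = 2 * Eco (n+1) + (n+1) * Eco n := by
  rw [Eco, Finset.sum_range_succ' _ (n+2)]
  have : ∀ j ∈ range (n+2), Tco (n+2) (j+1) = 2 * Tco (n+1) (j+1) + (n+1) * Tco n j :=
    fun j _ => Tco_succ n j
  rw [Finset.sum_congr rfl this, Finset.sum_add_distrib, ← Finset.mul_sum, ← Finset.mul_sum]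
  have hE1 : Eco (n+1) = Tco (n+1) 0 + ∑ j ∈ range (n+1), Tco (n+1) (j+1) := by
    rw [Eco, Finset.sum_range_succ' _ (n+1)]; ring
  have hext : ∑ j ∈ range (n+2), Tco (n+1) (j+1) = ∑ j ∈ range (n+1), Tco (n+1) (j+1) := by
    rw [Finset.sum_range_succ, Tco_big (n+1) (n+2) (by omega), add_zero]
  have hext2 : ∑ j ∈ range (n+2), Tco n j = Eco n := by
    rw [Eco, Finset.sum_range_succ, Tco_big n (n+1) (by omega), add_zero]
  rw [hext, Tco_zero_right, hext2]
  have : ∑ j ∈ range (n+1), Tco (n+1) (j+1) = Eco (n+1) - Tco (n+1) 0 := by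
    rw [hE1]; ring
  rw [this]
  ring

section
variable (x : ℝ)

noncomputable def fse (k : ℕ) : ℝ := (2*x)^k / (k !)
noncomputable def gse (m : ℕ) : ℝ :=
  if Even m then (x^2/2)^(m/2) / ((m/2)!) else 0

lemma gse_eq (m : ℕ) : gse x (2*m) = (x^2/2)^m / (m !) := by
  simp [gse, Nat.mul_div_cancel_left m (by norm_num : 0 < 2)]

lemma hasSum_fse : HasSum (fse x) (Real.exp (2*x)) := by
  rw [Real.exp_eq_exp_ℝ]
  exact NormedSpace.expSeries_div_hasSum_exp (2*x)

lemma hasSum_gse : HasSum (gse x) (Real.exp (x^2/2)) := by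
  have h : HasSum (fun m => (x^2/2)^m / (m !)) (Real.exp (x^2/2)) := by
    rw [Real.exp_eq_exp_ℝ]
    exact NormedSpace.expSeries_div_hasSum_exp (x^2/2)
  have hinj : Function.Injective (fun m : ℕ => 2*m) := fun a b h => by dsimp only at h; omega
  have h2 : HasSum (gse x ∘ fun m => 2*m) (Real.exp (x^2/2)) := by
    have he : (gse x ∘ fun m => 2*m) = fun m => (x^2/2)^m / (m !) :=
      funext (fun m => gse_eq x m)
    rw [he]; exact h
  refine (Function.Injective.hasSum_iff hinj (fun m hm => ?_)).1 h2
  simp only [Set.mem_range, not_exists] at hm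
  simp only [gse]
  rw [if_neg]
  intro ⟨c, hc⟩
  exact hm c (by omega)

lemma summable_norm_fse : Summable (fun k => ‖fse x k‖) := by
  simpa [Real.norm_eq_abs] using (hasSum_fse x).summable.abs

lemma summable_norm_gse : Summable (fun m => ‖gse x m‖) := by
  simpa [Real.norm_eq_abs] using (hasSum_gse x).summable.abs

lemma cauchy_term (n : ℕ) :
    ∑ k ∈ range (n+1), fse x k * gse x (n-k) = Eco n * x^n / (n !) := by
  have key : ∀ k ∈ range (n+1), fse x k * gse x (n-k) =
      ∑ j ∈ range (n+1), if n - k = 2*j ∧ 2*j ≤ n then fse x k * ((x^2/2)^j / (j !)) else 0 := by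
    intro k hk
    simp only [mem_range] at hk
    by_cases he : Even (n - k)
    · obtain ⟨c, hc⟩ := he
      have hcn : n - k = 2*c := by omega
      have hcle : c < n+1 := by omega
      rw [Finset.sum_eq_single c]
      · rw [if_pos ⟨hcn, by omega⟩, hcn, gse_eq]
      · intro b _ hb
        rw [if_neg]; rintro ⟨h1, _⟩; omega
      · intro hc'; exact absurd (mem_range.2 hcle) hc'
    · rw [Finset.sum_eq_zero, mul_eq_zero]
      · right
        simp only [gse, if_neg he]
      · intro b _
        rw [if_neg]; rintro ⟨h1, _⟩; exact he ⟨b, by omega⟩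
  rw [Finset.sum_congr rfl key, Finset.sum_comm]
  rw [Eco, Finset.sum_mul, Finset.sum_div]
  refine Finset.sum_congr rfl (fun j hj => ?_)
  by_cases hjn : 2*j ≤ n
  · rw [Finset.sum_eq_single (n - 2*j)]
    · rw [if_pos ⟨by omega, hjn⟩]
      simp only [Tco, if_pos hjn, fse]
      rw [mul_pow, div_pow, div_mul_div_comm]
      have f2 : ((n-2*j)! : ℝ) ≠ 0 := by positivity
      have f3 : (j ! : ℝ) ≠ 0 := by positivity
      have hxp : x ^ (n - 2*j) * x ^ (2*j) = x ^ n := by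
        rw [← pow_add]; congr 1; omega
      field_simp
      ring_nf
      rw [pow_mul]
      ring_nf
      rw [← hxp]
      ring
    · intro b hb hbne
      rw [if_neg]; rintro ⟨h1, _⟩; simp only [mem_range] at hb; omega
    · intro h; exact absurd (mem_range.2 (by omega)) h
  · rw [Finset.sum_eq_zero, Tco, if_neg hjn]
    · simp
    · intro b _
      rw [if_neg]; rintro ⟨_, h2⟩; omega

theorem hasSum_Eco :
    HasSum (fun n : ℕ => Eco n * x ^ n / (n !)) (Real.exp (2 * x + x ^ 2 / 2)) := by
  have h := hasSum_sum_range_mul_of_summable_norm (summable_norm_fse x) (summable_norm_gse x)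
  rw [(hasSum_fse x).tsum_eq, (hasSum_gse x).tsum_eq, ← Real.exp_add] at h
  have he : (fun n : ℕ => Eco n * x ^ n / (n !)) =
      fun n => ∑ k ∈ range (n+1), fse x k * gse x (n-k) :=
    funext (fun n => (cauchy_term x n).symm)
  rw [he]
  exact h
end

end Coeffs

lemma mnum_cast (n : ℕ) : (mnum n : ℝ) = Eco n := by
  induction n using Nat.strong_induction_on with
  | _ n ih =>
    match n with
    | 0 => rw [mnum_zero, Eco_zero]; norm_num
    | 1 => rw [mnum_one, Eco_one]; norm_num
    | (m+2) =>
      rw [mnum_rec, Eco_rec, ← ih (m+1) (by omega), ← ih m (by omega)]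
      push_cast
      ring

/-- for every real `x`, the series `Σ ε_n·xⁿ/n!` converges with sum
`e^(2x + x²/2)`. -/
theorem stmt15 (x : ℝ) :
    HasSum (fun n : ℕ => (epsnum n : ℝ) * x ^ n / (Nat.factorial n : ℝ))
      (Real.exp (2 * x + x ^ 2 / 2)) := by
  have he : (fun n : ℕ => (epsnum n : ℝ) * x ^ n / (Nat.factorial n : ℝ)) =
      (fun n : ℕ => Eco n * x ^ n / (Nat.factorial n : ℝ)) :=
    funext fun n => by rw [epsnum_eq_mnum, mnum_cast]
  rw [he]
  exact hasSum_Eco x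
end
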